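/- arXiv:1609.03789 — 20 statements merged into one kernel-verified Lean document; each statement's English description precedes it below -/
import Mathlib

section
/- Let R be a unital ring with involution and a ∈ R. Then a has a {1,3}-inverse x (i.e., axa = a and (ax)* = ax) if and only if x*a*a = a. -/
theorem stmt_0 {R : Type*} [Ring R] [StarRing R] (a x : R) :
    (a * x * a = a ∧ star (a * x) = a * x) ↔ star x * star a * a = a := by
  constructor
  · rintro ⟨h1, h2⟩
    calc star x * star a * a = star (a * x) * a := by rw [star_mul]
    _ = a * x * a := by rw [h2]
    _ = a := h1
  · intro h
    have hu : star (a * x) * (a * x) = a * x := by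
      rw [star_mul]
      calc star x * star a * (a * x) = (star x * star a * a) * x := by rw [← mul_assoc]
      _ = a * x := by rw [h]
    have hs : star (a * x) = a * x := by
      conv_lhs => rw [← hu]
      rw [star_mul, star_star, hu]
    refine ⟨?_, hs⟩
    calc a * x * a = star (a * x) * a := by rw [hs]
    _ = star x * star a * a := by rw [star_mul]
    _ = a := h
end

section
/- Let R be a unital ring with involution and a ∈ R. Then a is {1,3}-invertible if and only if a ∈ Ra*a, i.e., there exists s ∈ R with a = s a* a. -/
theorem stmt_1 {R : Type*} [Ring R] [StarRing R] (a : R) :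
    (∃ x : R, a * x * a = a ∧ star (a * x) = a * x) ↔ ∃ s : R, a = s * star a * a := by
  constructor
  · rintro ⟨x, h1, h2⟩
    refine ⟨star x, ?_⟩
    calc a = a * x * a := h1.symm
    _ = star (a * x) * a := by rw [h2]
    _ = star x * star a * a := by rw [star_mul]
  · rintro ⟨s, hs⟩
    have ha : star a = star a * a * star s := by
      conv_lhs => rw [hs]
      simp [star_mul, mul_assoc]
    have key : star (a * star s) = a * star s := by
      rw [star_mul, star_star]
      calc s * star a = s * (star a * a * star s) := by rw [← ha]
      _ = (s * star a * a) * star s := by noncomm_ring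
      _ = a * star s := by rw [← hs]
    refine ⟨star s, ?_, key⟩
    calc a * star s * a = star (a * star s) * a := by rw [key]
    _ = s * star a * a := by rw [star_mul, star_star]
    _ = a := hs.symm
end

section
/- Let R be a unital ring with involution, a ∈ R, and n ≥ 1. Then a ∈ R(a*)^n a if and only if a ∈ Ra*a ∩ a^n R. -/
theorem stmt_2 {R : Type*} [Ring R] [StarRing R] (a : R) (n : ℕ) (hn : 1 ≤ n) :
    (∃ r : R, a = r * (star a) ^ n * a) ↔
      ((∃ r : R, a = r * star a * a) ∧ (∃ r : R, a = a ^ n * r)) := by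
  obtain ⟨m, rfl⟩ : ∃ m, n = m + 1 := ⟨n - 1, (Nat.succ_pred_eq_of_pos hn).symm⟩
  constructor
  · rintro ⟨x, h⟩
    have hs : star a = star a * a ^ (m + 1) * star x := by
      conv_lhs => rw [h]
      simp [star_mul, star_pow, mul_assoc]
    constructor
    · refine ⟨x * (star a) ^ m, ?_⟩
      conv_lhs => rw [h]
      rw [pow_succ]
      simp only [mul_assoc]
    · refine ⟨star x * a, ?_⟩
      calc a = x * (star a) ^ (m + 1) * a := h
        _ = x * ((star a) ^ m * (star a * a ^ (m + 1) * star x)) * a := by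
            rw [← hs, ← pow_succ]
        _ = x * (star a) ^ (m + 1) * a * (a ^ m * (star x * a)) := by
            rw [pow_succ']
            simp only [pow_succ, mul_assoc]
        _ = a ^ (m + 1) * (star x * a) := by rw [← h, pow_succ', mul_assoc]
  · rintro ⟨⟨s, hs⟩, ⟨t, ht⟩⟩
    refine ⟨s * star t, ?_⟩
    have h1 : star a = star t * (star a) ^ (m + 1) := by
      conv_lhs => rw [ht]
      rw [star_mul, star_pow]
    calc a = s * star a * a := hs
      _ = s * (star t * (star a) ^ (m + 1)) * a := by rw [← h1]
      _ = s * star t * (star a) ^ (m + 1) * a := by simp only [mul_assoc]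
end

section
/- Let R be a unital ring with involution, a ∈ R, and n ≥ 1. Then a ∈ R(a*)^n a if and only if R decomposes as the direct sum R = °a ⊕ R(a*)^n, where °a = {x ∈ R : xa = 0}. -/
private lemma key_3 {R : Type*} [Ring R] [StarRing R] (a r : R) (n : ℕ) (hn : 1 ≤ n)
    (hr : a = r * (star a) ^ n * a) (t : R) (ht : t * (star a) ^ n * a = 0) :
    t * (star a) ^ n = 0 := by
  have hstar : star a = star a * a ^ n * star r := by
    nth_rewrite 1 [hr]
    simp [star_mul, star_pow, star_star, mul_assoc]
  have h1 : (star a) ^ n = (star a) ^ (n - 1) * (star a * a ^ n * star r) := by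
    rw [← hstar, ← pow_succ, Nat.sub_add_cancel hn]
  have h2 : t * (star a) ^ n = (t * (star a) ^ n * a) * (a ^ (n - 1) * star r) := by
    calc t * (star a) ^ n = t * ((star a) ^ (n - 1) * (star a * a ^ n * star r)) := by rw [h1]
      _ = (t * (star a) ^ n * a) * (a ^ (n - 1) * star r) := by
          rw [show a ^ n = a * a ^ (n - 1) from by rw [← pow_succ', Nat.sub_add_cancel hn],
            show (star a) ^ n = (star a) ^ (n - 1) * star a from by
              rw [← pow_succ, Nat.sub_add_cancel hn]]
          simp only [mul_assoc]
  rw [ht, zero_mul] at h2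
  exact h2

theorem stmt_3 {R : Type*} [Ring R] [StarRing R] (a : R) (n : ℕ) (hn : 1 ≤ n) :
    (∃ r : R, a = r * (star a) ^ n * a) ↔
      ∀ y : R, ∃! p : R × R,
        p.1 * a = 0 ∧ (∃ r : R, p.2 = r * (star a) ^ n) ∧ y = p.1 + p.2 := by
  constructor
  · rintro ⟨r, hr⟩ y
    have hmain : y * r * (star a) ^ n * a = y * a := by
      calc y * r * (star a) ^ n * a = y * (r * (star a) ^ n * a) := by
            simp only [mul_assoc]
        _ = y * a := by rw [← hr]
    refine ⟨(y - y * r * (star a) ^ n, y * r * (star a) ^ n),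
      ⟨?_, ⟨y * r, rfl⟩, by simp⟩, ?_⟩
    · rw [sub_mul, hmain, sub_self]
    · rintro ⟨x, z⟩ ⟨hx, ⟨s, hs⟩, hy⟩
      simp only at hx hs hy
      have hz : z = y * r * (star a) ^ n := by
        have h0 : (s - y * r) * (star a) ^ n * a = 0 := by
          have : z * a = y * a := by
            rw [hy, add_mul, hx, zero_add]
          rw [sub_mul, sub_mul, ← hs, hmain, this, sub_self]
        have := key_3 a r n hn hr (s - y * r) h0
        rw [sub_mul] at this
        rw [hs, ← sub_eq_zero]
        exact this
      have hxeq : x = y - y * r * (star a) ^ n := by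
        rw [← hz, hy]; abel
      simp [Prod.ext_iff, hxeq, hz]
  · intro h
    obtain ⟨⟨x, z⟩, ⟨hx, ⟨s, hs⟩, hy⟩, -⟩ := h 1
    simp only at hx hs hy
    refine ⟨s, ?_⟩
    calc a = 1 * a := by rw [one_mul]
      _ = x * a + z * a := by rw [hy, add_mul]
      _ = s * (star a) ^ n * a := by rw [hx, hs, zero_add]
end

section
/- Let R be a unital ring with involution, a ∈ R, and n ≥ 1. If R = °a + R(a*)^n (as a sum of additive subgroups, not necessarily direct), then a ∈ R(a*)^n a. -/
theorem stmt_4 {R : Type*} [Ring R] [StarRing R] (a : R) (n : ℕ) (hn : 1 ≤ n)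
    (h : ∀ y : R, ∃ x z : R, x * a = 0 ∧ (∃ r : R, z = r * (star a) ^ n) ∧ y = x + z) :
    ∃ r : R, a = r * (star a) ^ n * a := by
  obtain ⟨x, z, hx, ⟨r, hr⟩, h1⟩ := h 1
  exact ⟨r, by rw [← hr]; nth_rewrite 1 [← one_mul a]; rw [h1, add_mul, hx, zero_add]⟩
end

section
/- Let R be a unital ring with involution, a ∈ R, and n ≥ 1. Then a ∈ a(a*)^n R if and only if a ∈ aa*R ∩ Ra^n. -/
private lemma key_aux {R : Type*} [Ring R] [StarRing R] (a x : R)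
    (h : a = a * star a * x) : a = a * star x * a := by
  have h2 : star a = star x * a * star a := by
    conv_lhs => rw [h]
    simp [star_mul, mul_assoc]
  calc a = a * star a * x := h
    _ = a * (star x * a * star a) * x := by rw [← h2]
    _ = a * star x * (a * star a * x) := by noncomm_ring
    _ = a * star x * a := by rw [← h]

theorem stmt_5 {R : Type*} [Ring R] [StarRing R] (a : R) (n : ℕ) (hn : 1 ≤ n) :
    (∃ r : R, a = a * (star a) ^ n * r) ↔
      ((∃ r : R, a = a * star a * r) ∧ (∃ r : R, a = r * a ^ n)) := by
  obtain ⟨m, rfl⟩ : ∃ m, n = m + 1 := ⟨n - 1, (Nat.succ_pred_eq_of_pos hn).symm⟩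
  constructor
  · rintro ⟨r, hr⟩
    have hx : a = a * star a * ((star a) ^ m * r) := by
      calc a = a * (star a) ^ (m + 1) * r := hr
        _ = a * star a * ((star a) ^ m * r) := by rw [pow_succ']; noncomm_ring
    refine ⟨⟨(star a) ^ m * r, hx⟩, a * star r, ?_⟩
    have hk := key_aux a ((star a) ^ m * r) hx
    calc a = a * star ((star a) ^ m * r) * a := hk
      _ = a * (star r * a ^ m) * a := by simp [star_mul, star_pow]
      _ = a * star r * a ^ (m + 1) := by rw [pow_succ]; noncomm_ring
  · rintro ⟨⟨x, hx⟩, s, hs⟩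
    have hstar : star a = (star a) ^ (m + 1) * star s := by
      conv_lhs => rw [hs]
      simp [star_mul, star_pow]
    refine ⟨star s * x, ?_⟩
    calc a = a * star a * x := hx
      _ = a * ((star a) ^ (m + 1) * star s) * x := by rw [← hstar]
      _ = a * (star a) ^ (m + 1) * (star s * x) := by noncomm_ring
end

section
/- Let R be a unital ring with involution, a ∈ R, and n ≥ 2. Then a is core invertible if and only if a ∈ R(a*)^n a ∩ Ra^n. Moreover, if a = s (a*)^n a for some s ∈ R (and a ∈ Ra^n), then the core inverse of a equals a^{n-1} s*. -/
/-- `x` is the core inverse of `a`. -/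
def IsCoreInverse {R : Type*} [Ring R] [StarRing R] (a x : R) : Prop :=
  a * x * a = a ∧
    {y : R | ∃ r : R, y = x * r} = {y : R | ∃ r : R, y = a * r} ∧
    {y : R | ∃ r : R, y = r * x} = {y : R | ∃ r : R, y = r * star a}

section Aux

variable {R : Type*} [Ring R] [StarRing R]

private lemma aux_right_eq (x a : R) (h1 : ∃ c : R, x = a * c) (h2 : ∃ c : R, a = x * c) :
    {y : R | ∃ r : R, y = x * r} = {y : R | ∃ r : R, y = a * r} := by
  ext z
  simp only [Set.mem_setOf_eq]
  constructor
  · rintro ⟨r, rfl⟩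
    obtain ⟨c, hc⟩ := h1
    exact ⟨c * r, by rw [hc, mul_assoc]⟩
  · rintro ⟨r, rfl⟩
    obtain ⟨c, hc⟩ := h2
    exact ⟨c * r, by rw [hc, mul_assoc]⟩

private lemma aux_left_eq (x b : R) (h1 : ∃ c : R, x = c * b) (h2 : ∃ c : R, b = c * x) :
    {y : R | ∃ r : R, y = r * x} = {y : R | ∃ r : R, y = r * b} := by
  ext z
  simp only [Set.mem_setOf_eq]
  constructor
  · rintro ⟨r, rfl⟩
    obtain ⟨c, hc⟩ := h1
    exact ⟨r * c, by rw [hc, mul_assoc]⟩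
  · rintro ⟨r, rfl⟩
    obtain ⟨c, hc⟩ := h2
    exact ⟨r * c, by rw [hc, mul_assoc]⟩

/-- The five Hartwig-type equations satisfied by a core inverse. -/
private lemma core_props {a x : R} (h : IsCoreInverse a x) :
    a * x * a = a ∧ x * a * x = x ∧ star (a * x) = a * x ∧ x * a * a = a ∧ a * x * x = x := by
  obtain ⟨h1, h2, h3⟩ := h
  -- x = a * t
  have hxmem : x ∈ {y : R | ∃ r : R, y = a * r} := by
    rw [← h2]; exact ⟨1, (mul_one x).symm⟩
  obtain ⟨t, ht⟩ := hxmem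
  -- a = x * v
  have hamem : a ∈ {y : R | ∃ r : R, y = x * r} := by
    rw [h2]; exact ⟨1, (mul_one a).symm⟩
  obtain ⟨v, hv⟩ := hamem
  -- x = w * star a
  have hwmem : x ∈ {y : R | ∃ r : R, y = r * star a} := by
    rw [← h3]; exact ⟨1, (one_mul x).symm⟩
  obtain ⟨w, hw⟩ := hwmem
  -- E5 : a x x = x
  have E5 : a * x * x = x := by
    calc a * x * x = a * x * (a * t) := by rw [← ht]
      _ = (a * x * a) * t := by noncomm_ring
      _ = a * t := by rw [h1]
      _ = x := ht.symm
  -- star x = a * star w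
  have hxstar : star x = a * star w := by
    rw [hw, star_mul, star_star]
  -- key : (a x)(a x)* = (a x)*
  have key : (a * x) * star (a * x) = star (a * x) := by
    have h' : star (a * x) = a * star w * star a := by
      rw [star_mul, hxstar]
    rw [h']
    calc (a * x) * (a * star w * star a) = (a * x * a) * (star w * star a) := by noncomm_ring
      _ = a * (star w * star a) := by rw [h1]
      _ = a * star w * star a := by rw [mul_assoc]
  -- E3 : (a x)* = a x
  have E3 : star (a * x) = a * x := by
    have : a * x = star (a * x) := by
      calc a * x = star (star (a * x)) := (star_star _).symm
        _ = star ((a * x) * star (a * x)) := by rw [key]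
        _ = star (star (a * x)) * star (a * x) := by rw [star_mul]
        _ = (a * x) * star (a * x) := by rw [star_star]
        _ = star (a * x) := key
    exact this.symm
  -- h3' : a* (a x) = a*
  have h3' : star a * (a * x) = star a := by
    have hh : star a * (a * x) = star ((a * x) * a) := by
      rw [star_mul, E3]
    rw [hh]
    rw [show (a * x) * a = a from h1]
  -- E2 : x a x = x
  have E2 : x * a * x = x := by
    calc x * a * x = x * (a * x) := by rw [mul_assoc]
      _ = (w * star a) * (a * x) := by rw [← hw]
      _ = w * (star a * (a * x)) := by rw [mul_assoc]
      _ = w * star a := by rw [h3']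
      _ = x := hw.symm
  -- E4 : x a a = a
  have E4 : x * a * a = a := by
    calc x * a * a = x * a * (x * v) := by rw [← hv]
      _ = (x * a * x) * v := by noncomm_ring
      _ = x * v := by rw [E2]
      _ = a := hv.symm
  exact ⟨h1, E2, E3, E4, E5⟩

end Aux

theorem stmt_6 {R : Type*} [Ring R] [StarRing R] (a : R) (n : ℕ) (hn : 2 ≤ n) :
    ((∃ x : R, IsCoreInverse a x) ↔
      ((∃ s : R, a = s * (star a) ^ n * a) ∧ (∃ t : R, a = t * a ^ n))) ∧
    (∀ x s : R, IsCoreInverse a x → a = s * (star a) ^ n * a →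
      (∃ t : R, a = t * a ^ n) → x = a ^ (n - 1) * star s) := by
  obtain ⟨m, rfl⟩ : ∃ m, n = m + 2 := ⟨n - 2, by omega⟩
  constructor
  · constructor
    · -- forward: core inverse gives the two memberships
      rintro ⟨x, hx⟩
      obtain ⟨E1, E2, E3, E4, E5⟩ := core_props hx
      have h3' : star a * (a * x) = star a := by
        have hh : star a * (a * x) = star ((a * x) * a) := by
          rw [star_mul, E3]
        rw [hh]
        rw [show (a * x) * a = a from E1]
      -- x = a^k * x^(k+1)
      have hx_pow : ∀ k : ℕ, x = a ^ k * x ^ (k + 1) := by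
        intro k
        induction k with
        | zero => simp
        | succ k ih =>
          have step : a ^ (k + 1) * x ^ (k + 1 + 1) = a ^ k * ((a * x * x) * x ^ k) := by
            rw [pow_succ a k, pow_succ' x (k + 1), pow_succ' x k]
            noncomm_ring
          rw [step, E5, ← pow_succ' x k, ← ih]
      -- a = x^k * a^(k+1)
      have ha_pow : ∀ k : ℕ, a = x ^ k * a ^ (k + 1) := by
        intro k
        induction k with
        | zero => simp
        | succ k ih =>
          have step : x ^ (k + 1) * a ^ (k + 1 + 1) = x ^ k * ((x * a * a) * a ^ k) := by
            rw [pow_succ x k, pow_succ' a (k + 1), pow_succ' a k]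
            noncomm_ring
          rw [step, E4, ← pow_succ' a k, ← ih]
      constructor
      · -- s := star x ^ (m+2)
        refine ⟨star x ^ (m + 2), ?_⟩
        have hstar : star a = star a * a ^ (m + 2) * x ^ (m + 2) := by
          calc star a = star a * (a * x) := h3'.symm
            _ = star a * (a * (a ^ (m + 1) * x ^ (m + 2))) := by rw [← hx_pow (m + 1)]
            _ = star a * a ^ (m + 2) * x ^ (m + 2) := by
                rw [pow_succ' a (m + 1)]; noncomm_ring
        have h := congrArg star hstar
        simp only [star_mul, star_star, star_pow] at h
        rw [mul_assoc]
        exact h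
      · exact ⟨x ^ (m + 1), ha_pow (m + 1)⟩
    · -- backward: construct the core inverse
      rintro ⟨⟨s, hs⟩, ⟨t, ht⟩⟩
      set sa := star a with hsa
      -- {1,3}-inverse part
      set v := s * sa ^ (m + 1) with hvdef
      have hv : a = v * sa * a := by
        calc a = s * sa ^ (m + 2) * a := hs
          _ = v * sa * a := by rw [hvdef, pow_succ sa (m + 1)]; noncomm_ring
      have hA1 : sa = sa * a * star v := by
        have h := congrArg star hv
        simp only [star_mul, star_star, ← hsa] at h
        calc sa = star a := hsa.symm
          _ = sa * (star sa * star v) := by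
              rw [hsa] at h ⊢
              calc star a = star a * (star (star a) * star v) := h
                _ = star a * (star (star a) * star v) := rfl
          _ = sa * a * star v := by rw [hsa, star_star, mul_assoc]
      have hA2 : v * sa = a * star v := by
        calc v * sa = v * (sa * a * star v) := by rw [← hA1]
          _ = (v * sa * a) * star v := by noncomm_ring
          _ = a * star v := by rw [← hv]
      set x₀ := a ^ (m + 1) * star s with hx₀def
      have hx₀v : x₀ = star v := by
        rw [hvdef, star_mul, star_pow, hsa, star_star, hx₀def]
      have h13a : a * x₀ * a = a := by
        rw [hx₀v]
        calc a * star v * a = (v * sa) * a := by rw [← hA2]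
          _ = a := hv.symm
      have h13b : star (a * x₀) = a * x₀ := by
        rw [hx₀v, star_mul, star_star]
        calc v * star a = v * sa := by rw [hsa]
          _ = a * star v := hA2
      -- group-inverse part
      set p := t * a ^ m with hpdef
      have hp : a = p * a * a := by
        calc a = t * a ^ (m + 2) := ht
          _ = p * a * a := by rw [hpdef, pow_succ a (m + 1), pow_succ a m]; noncomm_ring
      set u := a ^ m * star s * a with hudef
      have hu : a = a * a * u := by
        calc a = a * x₀ * a := h13a.symm
          _ = a * (a ^ (m + 1) * star s) * a := by rw [hx₀def]
          _ = a * a * u := by rw [hudef, pow_succ' a m]; noncomm_ring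
      have hf1 : a * u = p * a := by
        calc a * u = (p * a * a) * u := by rw [← hp]
          _ = p * (a * a * u) := by noncomm_ring
          _ = p * a := by rw [← hu]
      have hfa : (a * u) * a = a := by
        rw [hf1]
        exact hp.symm
      have haf : a * (a * u) = a := by
        rw [← mul_assoc]
        exact hu.symm
      have hapa : a * p * a = a := by
        calc a * p * a = a * (p * a) := by rw [mul_assoc]
          _ = a * (a * u) := by rw [← hf1]
          _ = a := haf
      set g := p * a * u with hgdef
      have haga : a * g * a = a := by
        calc a * g * a = (a * p * a) * u * a := by rw [hgdef]; noncomm_ring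
          _ = a * u * a := by rw [hapa]
          _ = a := hfa
      have hga : g * a = a * u := by
        calc g * a = p * ((a * u) * a) := by rw [hgdef]; noncomm_ring
          _ = p * a := by rw [hfa]
          _ = a * u := hf1.symm
      -- the core inverse
      refine ⟨g * a * x₀, ?_, ?_, ?_⟩
      · calc a * (g * a * x₀) * a = (a * g * a) * x₀ * a := by noncomm_ring
          _ = a * x₀ * a := by rw [haga]
          _ = a := h13a
      · refine aux_right_eq _ _ ⟨u * x₀, ?_⟩ ⟨a * a, ?_⟩
        · calc g * a * x₀ = (g * a) * x₀ := rfl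
            _ = (a * u) * x₀ := by rw [hga]
            _ = a * (u * x₀) := by rw [mul_assoc]
        · calc a = (a * u) * a := hfa.symm
            _ = (g * a) * a := by rw [hga]
            _ = g * (a * x₀ * a) * a := by rw [h13a]
            _ = g * a * x₀ * (a * a) := by noncomm_ring
      · refine aux_left_eq _ _ ⟨g * star x₀, ?_⟩ ⟨star a * a, ?_⟩
        · calc g * a * x₀ = g * (a * x₀) := by rw [mul_assoc]
            _ = g * star (a * x₀) := by rw [h13b]
            _ = g * (star x₀ * star a) := by rw [star_mul]
            _ = (g * star x₀) * star a := (mul_assoc g (star x₀) (star a)).symm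
        · have sax : star a * (a * x₀) = star a := by
            calc star a * (a * x₀) = star a * star (a * x₀) := by rw [h13b]
              _ = star ((a * x₀) * a) := (star_mul _ _).symm
              _ = star a := by rw [show (a * x₀) * a = a from h13a]
          calc star a = star a * (a * x₀) := sax.symm
            _ = star a * ((a * g * a) * x₀) := by rw [haga]
            _ = (star a * a) * (g * a * x₀) := by noncomm_ring
  · -- uniqueness formula
    intro x s hx hs _
    obtain ⟨E1, E2, E3, E4, E5⟩ := core_props hx
    show x = a ^ (m + 1) * star s
    have step1 : x = x * star x * star a := by
      calc x = x * a * x := E2.symm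
        _ = x * (a * x) := by rw [mul_assoc]
        _ = x * star (a * x) := by rw [E3]
        _ = x * (star x * star a) := by rw [star_mul]
        _ = x * star x * star a := by rw [mul_assoc]
    have step2 : star a = star a * a ^ (m + 2) * star s := by
      have h := congrArg star hs
      simp only [star_mul, star_star, star_pow] at h
      rw [mul_assoc]
      exact h
    have step3 : x = x * a ^ (m + 2) * star s := by
      calc x = x * star x * star a := step1
        _ = x * star x * (star a * a ^ (m + 2) * star s) := by rw [← step2]
        _ = (x * star x * star a) * a ^ (m + 2) * star s := by noncomm_ring
        _ = x * a ^ (m + 2) * star s := by rw [← step1]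
    have step4 : x * a ^ (m + 2) = a ^ (m + 1) := by
      calc x * a ^ (m + 2) = x * (a * (a * a ^ m)) := by
            rw [pow_succ' a (m + 1), pow_succ' a m]
        _ = (x * a * a) * a ^ m := by noncomm_ring
        _ = a * a ^ m := by rw [E4]
        _ = a ^ (m + 1) := (pow_succ' a m).symm
    rw [step3, step4]
end

section
/- Let R be a unital ring with involution, a ∈ R, and n ≥ 2. Then a is dual core invertible if and only if a ∈ a(a*)^n R ∩ a^n R. Moreover, if a = a(a*)^n t for some t ∈ R (and a ∈ a^n R), then the dual core inverse of a equals t* a^{n-1}. -/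
/-- `x` is the dual core inverse of `a`. -/
def IsDualCoreInverse {R : Type*} [Ring R] [StarRing R] (a x : R) : Prop :=
  a * x * a = a ∧
    {y : R | ∃ r : R, y = r * x} = {y : R | ∃ r : R, y = r * a} ∧
    {y : R | ∃ r : R, y = x * r} = {y : R | ∃ r : R, y = star a * r}

section Aux

variable {R : Type*} [Ring R] [StarRing R]

lemma dci_mems {a x : R} (h : IsDualCoreInverse a x) :
    a * x * a = a ∧ (∃ p, x = p * a) ∧ (∃ q, a = q * x) ∧
      (∃ u, x = star a * u) ∧ (∃ v, star a = x * v) := by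
  obtain ⟨h1, hL, hR⟩ := h
  refine ⟨h1, ?_, ?_, ?_, ?_⟩
  · have hx : x ∈ {y : R | ∃ r, y = r * x} := ⟨1, (one_mul x).symm⟩
    rw [hL] at hx; exact hx
  · have ha : a ∈ {y : R | ∃ r, y = r * a} := ⟨1, (one_mul a).symm⟩
    rw [← hL] at ha; exact ha
  · have hx : x ∈ {y : R | ∃ r, y = x * r} := ⟨1, (mul_one x).symm⟩
    rw [hR] at hx; exact hx
  · have ha : star a ∈ {y : R | ∃ r, y = star a * r} := ⟨1, (mul_one _).symm⟩
    rw [← hR] at ha; exact ha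

lemma dci_core {a x : R} (h : IsDualCoreInverse a x) :
    x * a * x = x ∧ star (x * a) = x * a ∧ a = a * a * x ∧ x = x * x * a := by
  obtain ⟨h1, ⟨p, hp⟩, ⟨q, hq⟩, ⟨u, hu⟩, -⟩ := dci_mems h
  have s2 : star (x * a) * star a = star a := by
    have h1' : a * (x * a) = a := by rw [← mul_assoc]; exact h1
    have := congrArg star h1'
    rwa [star_mul] at this
  have s3 : star (x * a) * x = x := by
    calc star (x * a) * x = star (x * a) * (star a * u) := by rw [hu]
    _ = (star (x * a) * star a) * u := by rw [← mul_assoc]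
    _ = star a * u := by rw [s2]
    _ = x := hu.symm
  have s4 : star (x * a) * (x * a) = x * a := by
    rw [← mul_assoc, s3]
  have s5 : star (x * a) = x * a := by
    have := congrArg star s4
    rw [star_mul, star_star] at this
    exact this.symm.trans s4
  have sxax : x * a * x = x := by
    calc x * a * x = star (x * a) * x := by rw [s5]
    _ = x := s3
  have ha2 : a = a * a * x := by
    calc a = q * x := hq
    _ = q * (x * a * x) := by rw [sxax]
    _ = (q * x) * (a * x) := by simp only [mul_assoc]
    _ = a * (a * x) := by rw [← hq]
    _ = a * a * x := (mul_assoc a a x).symm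
  have hx2 : x = x * x * a := by
    calc x = p * a := hp
    _ = p * (a * x * a) := by rw [h1]
    _ = (p * a) * (x * a) := by simp only [mul_assoc]
    _ = x * (x * a) := by rw [← hp]
    _ = x * x * a := (mul_assoc x x a).symm
  exact ⟨sxax, s5, ha2, hx2⟩

lemma dci_unique {a x y : R} (hx : IsDualCoreInverse a x) (hy : IsDualCoreInverse a y) :
    x = y := by
  obtain ⟨-, ⟨p, hp⟩, -, -, ⟨v, hv⟩⟩ := dci_mems hx
  obtain ⟨-, -, ⟨q, hq⟩, ⟨u', hu'⟩, -⟩ := dci_mems hy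
  obtain ⟨hxax, -, -, -⟩ := dci_core hx
  obtain ⟨hyay, -, -, -⟩ := dci_core hy
  have hxy : y = x * (v * u') := by rw [hu', hv, mul_assoc]
  have hyx : x = (p * q) * y := by rw [hp, hq, mul_assoc]
  have e1 : x * a * y = y := by
    calc x * a * y = x * a * (x * (v * u')) := by rw [← hxy]
    _ = (x * a * x) * (v * u') := by simp only [mul_assoc]
    _ = x * (v * u') := by rw [hxax]
    _ = y := hxy.symm
  have e2 : x * a * y = x := by
    calc x * a * y = ((p * q) * y) * a * y := by rw [← hyx]
    _ = (p * q) * (y * a * y) := by simp only [mul_assoc]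
    _ = (p * q) * y := by rw [hyay]
    _ = x := hyx.symm
  exact e2.symm.trans e1

lemma dci_forward {a x : R} (h : IsDualCoreInverse a x) (n : ℕ) (hn : 2 ≤ n) :
    (∃ t : R, a = a * (star a) ^ n * t) ∧ (∃ t : R, a = a ^ n * t) := by
  obtain ⟨h1, -, -, -, -⟩ := dci_mems h
  obtain ⟨sxax, s5, ha2, hx2⟩ := dci_core h
  obtain ⟨k, rfl⟩ : ∃ k, n = k + 2 := ⟨n - 2, by omega⟩
  constructor
  · have sx : star x = star a * (star x * star x) := by
      have := congrArg star hx2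
      rwa [star_mul, star_mul] at this
    have key : ∀ m : ℕ, x * a = (star a) ^ (m + 1) * (star x) ^ (m + 1) := by
      intro m; induction m with
      | zero =>
        rw [pow_one, pow_one, ← star_mul, s5]
      | succ m ih =>
        have e2 : (star a) ^ (m + 2) * (star x) ^ (m + 2) =
            (star a) ^ (m + 1) * ((star a * (star x * star x)) * (star x) ^ m) := by
          rw [pow_succ (star a) (m + 1), pow_succ' (star x) (m + 1), pow_succ' (star x) m]
          simp only [mul_assoc]
        calc x * a = (star a) ^ (m + 1) * (star x) ^ (m + 1) := ih
        _ = (star a) ^ (m + 1) * (star x * (star x) ^ m) := by rw [pow_succ' (star x) m]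
        _ = (star a) ^ (m + 1) * ((star a * (star x * star x)) * (star x) ^ m) := by
          rw [← sx]
        _ = (star a) ^ (m + 2) * (star x) ^ (m + 2) := e2.symm
    have hae : a = a * (x * a) := by rw [← mul_assoc]; exact h1.symm
    refine ⟨(star x) ^ (k + 2), ?_⟩
    calc a = a * (x * a) := hae
    _ = a * ((star a) ^ (k + 2) * (star x) ^ (k + 2)) := by rw [key (k + 1)]
    _ = a * (star a) ^ (k + 2) * (star x) ^ (k + 2) := (mul_assoc _ _ _).symm
  · have key2 : ∀ m : ℕ, a = a ^ (m + 2) * x ^ (m + 1) := by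
      intro m; induction m with
      | zero =>
        rw [pow_one, sq]; exact ha2
      | succ m ih =>
        have h2' : a ^ (m + 2) = a ^ (m + 3) * x := by
          calc a ^ (m + 2) = a ^ (m + 1) * a := pow_succ a (m + 1)
          _ = a ^ (m + 1) * (a * a * x) := by rw [← ha2]
          _ = a ^ (m + 3) * x := by
            rw [pow_succ a (m + 2), pow_succ a (m + 1)]; simp only [mul_assoc]
        calc a = a ^ (m + 2) * x ^ (m + 1) := ih
        _ = a ^ (m + 3) * x * x ^ (m + 1) := by rw [h2']
        _ = a ^ (m + 3) * x ^ (m + 2) := by rw [mul_assoc, ← pow_succ' x (m + 1)]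
    exact ⟨x ^ (k + 1), key2 k⟩

lemma dci_backward {a t s : R} (k : ℕ) (h1 : a = a * (star a) ^ (k + 2) * t)
    (h2 : a = a ^ (k + 2) * s) :
    IsDualCoreInverse a (star t * a ^ (k + 1)) := by
  have d1 : star t * (a ^ (k + 2) * star a) = star a := by
    conv_rhs => rw [h1]
    rw [star_mul, star_mul, star_pow, star_star]
  have e1 : a ^ (k + 2) * ((star a) ^ (k + 2) * t) = a ^ (k + 2) := by
    calc a ^ (k + 2) * ((star a) ^ (k + 2) * t)
        = a ^ (k + 1) * (a * (star a) ^ (k + 2) * t) := by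
          rw [pow_succ a (k + 1)]; simp only [mul_assoc]
    _ = a ^ (k + 1) * a := by rw [← h1]
    _ = a ^ (k + 2) := (pow_succ a (k + 1)).symm
  have d2 : a * (star t * a ^ (k + 2)) = a := by
    calc a * (star t * a ^ (k + 2))
        = a * (star t * (a ^ (k + 2) * ((star a) ^ (k + 2) * t))) := by rw [e1]
    _ = (a * (star t * (a ^ (k + 2) * star a))) * ((star a) ^ (k + 1) * t) := by
        rw [pow_succ' (star a) (k + 1)]; simp only [mul_assoc]
    _ = (a * star a) * ((star a) ^ (k + 1) * t) := by rw [d1]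
    _ = a * (star a) ^ (k + 2) * t := by
        rw [pow_succ' (star a) (k + 1)]; simp only [mul_assoc]
    _ = a := h1.symm
  have haxa : a * (star t * a ^ (k + 1)) * a = a := by
    calc a * (star t * a ^ (k + 1)) * a
        = a * (star t * a ^ (k + 2)) := by
          rw [pow_succ a (k + 1)]; simp only [mul_assoc]
    _ = a := d2
  have d3 : a = a * a * (a ^ k * s) := by
    calc a = a ^ (k + 2) * s := h2
    _ = a * a * (a ^ k * s) := by simp only [pow_succ', mul_assoc]
  have aux : a * (star t * (a ^ k * (a * a * (a ^ k * s)))) = a * (a ^ k * s) := by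
    calc a * (star t * (a ^ k * (a * a * (a ^ k * s))))
        = (a * (star t * a ^ (k + 2))) * (a ^ k * s) := by
          rw [pow_succ a (k + 1), pow_succ a k]; simp only [mul_assoc]
    _ = a * (a ^ k * s) := by rw [d2]
  have d4 : a * (star t * a ^ (k + 1)) = a * (a ^ k * s) := by
    calc a * (star t * a ^ (k + 1)) = a * (star t * (a ^ k * a)) := by rw [pow_succ a k]
    _ = a * (star t * (a ^ k * (a * a * (a ^ k * s)))) := by rw [← d3]
    _ = a * (a ^ k * s) := aux
  have d5 : a * a * (star t * a ^ (k + 1)) = a := by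
    calc a * a * (star t * a ^ (k + 1))
        = a * (a * (star t * a ^ (k + 1))) := by rw [mul_assoc]
    _ = a * (a * (a ^ k * s)) := by rw [d4]
    _ = a * a * (a ^ k * s) := (mul_assoc _ _ _).symm
    _ = a := d3.symm
  have d6 : a ^ (k + 2) * (star t * a ^ (k + 1)) = a ^ (k + 1) := by
    calc a ^ (k + 2) * (star t * a ^ (k + 1))
        = a ^ k * (a * a * (star t * a ^ (k + 1))) := by
          rw [pow_succ a (k + 1), pow_succ a k]; simp only [mul_assoc]
    _ = a ^ k * a := by rw [d5]
    _ = a ^ (k + 1) := (pow_succ a k).symm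
  have hex : (star t * a ^ (k + 2)) * (star t * a ^ (k + 1)) = star t * a ^ (k + 1) := by
    calc (star t * a ^ (k + 2)) * (star t * a ^ (k + 1))
        = star t * (a ^ (k + 2) * (star t * a ^ (k + 1))) := by rw [mul_assoc]
    _ = star t * a ^ (k + 1) := by rw [d6]
  have hstar : star (star t * a ^ (k + 2)) = (star a) ^ (k + 2) * t := by
    rw [star_mul, star_pow, star_star]
  have hM : star t * a ^ (k + 2) = (star t * a ^ (k + 2)) * ((star a) ^ (k + 2) * t) := by
    calc star t * a ^ (k + 2)
        = star t * (a ^ (k + 2) * ((star a) ^ (k + 2) * t)) := by rw [e1]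
    _ = (star t * a ^ (k + 2)) * ((star a) ^ (k + 2) * t) := (mul_assoc _ _ _).symm
  have hM' : star t * a ^ (k + 2) = (star t * a ^ (k + 2)) * star (star t * a ^ (k + 2)) := by
    rw [hstar]; exact hM
  have hsym : star (star t * a ^ (k + 2)) = star t * a ^ (k + 2) := by
    calc star (star t * a ^ (k + 2))
        = star ((star t * a ^ (k + 2)) * star (star t * a ^ (k + 2))) := by rw [← hM']
    _ = (star t * a ^ (k + 2)) * star (star t * a ^ (k + 2)) := by
        rw [star_mul, star_star]
    _ = star t * a ^ (k + 2) := hM'.symm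
  have estar_eq : (star a) ^ (k + 2) * t = star t * a ^ (k + 2) := hstar.symm.trans hsym
  have hxd : star t * a ^ (k + 1) =
      star a * ((star a) ^ (k + 1) * (t * (star t * a ^ (k + 1)))) := by
    calc star t * a ^ (k + 1)
        = (star t * a ^ (k + 2)) * (star t * a ^ (k + 1)) := hex.symm
    _ = ((star a) ^ (k + 2) * t) * (star t * a ^ (k + 1)) := by rw [estar_eq]
    _ = star a * ((star a) ^ (k + 1) * (t * (star t * a ^ (k + 1)))) := by
        rw [pow_succ' (star a) (k + 1)]; simp only [mul_assoc]
  have m4 : (star t * a ^ (k + 1)) * (a * star a) = star a := by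
    calc (star t * a ^ (k + 1)) * (a * star a)
        = star t * (a ^ (k + 2) * star a) := by
          rw [pow_succ a (k + 1)]; simp only [mul_assoc]
    _ = star a := d1
  refine ⟨haxa, ?_, ?_⟩
  · ext y; simp only [Set.mem_setOf_eq]
    constructor
    · rintro ⟨r, rfl⟩
      refine ⟨r * (star t * a ^ k), ?_⟩
      rw [pow_succ a k]; simp only [mul_assoc]
    · rintro ⟨r, rfl⟩
      refine ⟨r * (a * a), ?_⟩
      conv_lhs => rw [← d5]
      simp only [mul_assoc]
  · ext y; simp only [Set.mem_setOf_eq]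
    constructor
    · rintro ⟨r, rfl⟩
      refine ⟨(star a) ^ (k + 1) * (t * (star t * a ^ (k + 1))) * r, ?_⟩
      calc (star t * a ^ (k + 1)) * r
          = (star a * ((star a) ^ (k + 1) * (t * (star t * a ^ (k + 1))))) * r := by
            rw [← hxd]
      _ = star a * ((star a) ^ (k + 1) * (t * (star t * a ^ (k + 1))) * r) := by
            simp only [mul_assoc]
    · rintro ⟨r, rfl⟩
      refine ⟨(a * star a) * r, ?_⟩
      calc star a * r = ((star t * a ^ (k + 1)) * (a * star a)) * r := by rw [m4]
      _ = (star t * a ^ (k + 1)) * ((a * star a) * r) := by simp only [mul_assoc]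

end Aux

theorem stmt_7 {R : Type*} [Ring R] [StarRing R] (a : R) (n : ℕ) (hn : 2 ≤ n) :
    ((∃ x : R, IsDualCoreInverse a x) ↔
      ((∃ t : R, a = a * (star a) ^ n * t) ∧ (∃ t : R, a = a ^ n * t))) ∧
    (∀ x t : R, IsDualCoreInverse a x → a = a * (star a) ^ n * t →
      (∃ s : R, a = a ^ n * s) → x = star t * a ^ (n - 1)) := by
  obtain ⟨k, rfl⟩ : ∃ k, n = k + 2 := ⟨n - 2, by omega⟩
  constructor
  · constructor
    · rintro ⟨x, hx⟩
      exact dci_forward hx (k + 2) (by omega)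
    · rintro ⟨⟨t, ht⟩, ⟨s, hs⟩⟩
      exact ⟨star t * a ^ (k + 1), dci_backward k ht hs⟩
  · intro x t hx ht hs
    obtain ⟨s, hs⟩ := hs
    have h2 : IsDualCoreInverse a (star t * a ^ (k + 1)) := dci_backward k ht hs
    have := dci_unique hx h2
    simpa using this
end

section
/- Let R be a unital ring and a ∈ R, n ≥ 2. Then a is group invertible if and only if a ∈ a^n R ∩ R a^n. -/
private lemma aux_grp {R : Type*} [Ring R] (a u v : R)
    (h1 : a * (a * u) = a) (h2 : v * (a * a) = a) :
    ∃ x : R, a * x * a = a ∧ x * a * x = x ∧ a * x = x * a := by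
  have hau : a * u = v * a := by
    conv_lhs => rw [← h2]
    rw [mul_assoc, mul_assoc a a u, h1]
  have hua : v * a = a * u := hau.symm
  have hax : a * (v * (v * a)) = v * a := by
    rw [hua, ← mul_assoc v a u, hua, ← mul_assoc a (a * u) u, h1]
  have hxa : v * (v * a) * a = v * a := by
    rw [mul_assoc v (v * a) a, mul_assoc v a a, h2]
  refine ⟨v * (v * a), ?_, ?_, ?_⟩
  · rw [hax, mul_assoc, h2]
  · rw [hxa, mul_assoc v a (v * (v * a)), hax]
  · rw [hax, hxa]

theorem stmt_8 {R : Type*} [Ring R] (a : R) (n : ℕ) (hn : 2 ≤ n) :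
    (∃ x : R, a * x * a = a ∧ x * a * x = x ∧ a * x = x * a) ↔
      ((∃ r : R, a = a ^ n * r) ∧ (∃ r : R, a = r * a ^ n)) := by
  constructor
  · rintro ⟨x, h1, h2, h3⟩
    have hc : Commute a x := h3
    have key : ∀ k, a = a ^ (k + 1) * x ^ k := by
      intro k
      induction k with
      | zero => simp
      | succ k ih =>
        have hk : a * x ^ k = x ^ k * a := (hc.pow_right k).eq
        have step : a ^ (k + 2) * x ^ (k + 1) = a ^ (k + 1) * x ^ k * (a * x) := by
          rw [pow_succ a (k + 1), pow_succ x k]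
          simp only [mul_assoc]
          congr 1
          rw [← mul_assoc, hk, mul_assoc]
        rw [show k + 1 + 1 = k + 2 from rfl, step, ← ih, h3, ← mul_assoc, h1]
    have key1 : a = a ^ n * x ^ (n - 1) := by
      have := key (n - 1)
      rwa [Nat.sub_add_cancel (by omega : 1 ≤ n)] at this
    have key2 : a = x ^ (n - 1) * a ^ n := by
      rw [(hc.symm.pow_pow (n - 1) n).eq]
      exact key1
    exact ⟨⟨x ^ (n - 1), key1⟩, ⟨x ^ (n - 1), key2⟩⟩
  · rintro ⟨⟨r, hr⟩, ⟨s, hs⟩⟩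
    have hpow1 : a ^ n = a * a * a ^ (n - 2) := by
      conv_lhs => rw [show n = 1 + 1 + (n - 2) by omega]
      rw [pow_add, pow_add, pow_one]
    have hpow2 : a ^ n = a ^ (n - 2) * (a * a) := by
      conv_lhs => rw [show n = n - 2 + 1 + 1 by omega]
      rw [pow_add, pow_add, pow_one, mul_assoc]
    have h1 : a * (a * (a ^ (n - 2) * r)) = a := by
      rw [← mul_assoc a a (a ^ (n - 2) * r), ← mul_assoc (a * a) (a ^ (n - 2)) r,
        ← hpow1, ← hr]
    have h2 : s * a ^ (n - 2) * (a * a) = a := by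
      rw [mul_assoc s (a ^ (n - 2)) (a * a), ← hpow2, ← hs]
    exact aux_grp a (a ^ (n - 2) * r) (s * a ^ (n - 2)) h1 h2
end

section
/- Let R be a unital ring with involution, a ∈ R, and n ≥ 2. Then a is both Moore-Penrose invertible and group invertible if and only if a ∈ a(a*)^n R ∩ R(a*)^n a. In this case, if a = s(a*)^n a = a(a*)^n t, then a† = t* a^{2n-1} s*. -/
/-- `x` is a Moore–Penrose inverse of `a`. -/
def IsMPInverse {R : Type*} [Ring R] [StarRing R] (a x : R) : Prop :=
  a * x * a = a ∧ x * a * x = x ∧ star (a * x) = a * x ∧ star (x * a) = x * a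

/-- `x` is a group inverse of `a`. -/
def IsGroupInverse {R : Type*} [Ring R] (a x : R) : Prop :=
  a * x * a = a ∧ x * a * x = x ∧ a * x = x * a

section
set_option linter.unusedSectionVars false
set_option linter.unusedVariables false
variable {R : Type*} [Ring R] [StarRing R]

/-- If `a = v (star a) a`, then `star v` is a `{1,3}`-inverse of `a`. -/
private lemma aux13 (a v : R) (hv : a = v * star a * a) :
    a * star v * a = a ∧ star (a * star v) = a * star v := by
  have h' : star a * (a * star v) = star a := by
    have h := congrArg star hv
    simp only [star_mul, star_star, mul_assoc] at h
    exact h.symm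
  have key : a * star v = v * star a := by
    calc a * star v = v * star a * a * star v := by rw [← hv]
      _ = v * (star a * (a * star v)) := by simp only [mul_assoc]
      _ = v * star a := by rw [h']
  refine ⟨?_, ?_⟩
  · rw [key]; exact hv.symm
  · rw [key, star_mul, star_star]; exact key

/-- If `a = a (star a) u`, then `star u` is a `{1,4}`-inverse of `a`. -/
private lemma aux14 (a u : R) (hu : a = a * star a * u) :
    a * star u * a = a ∧ star (star u * a) = star u * a := by
  have h0 : star a = star u * star (star a) * star a := by
    have h := congrArg star hu
    simp only [star_mul, star_star, mul_assoc] at h ⊢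
    exact h
  obtain ⟨c1, c2⟩ := aux13 (star a) (star u) h0
  have c1' : a * star u * a = a := by
    have := congrArg star c1
    simp only [star_mul, star_star, mul_assoc] at this
    simp only [mul_assoc]
    exact this
  have c2' : star u * a = star a * u := by
    simpa only [star_mul, star_star] using c2
  refine ⟨c1', ?_⟩
  calc star (star u * a) = star a * u := by simp [star_mul]
    _ = star u * a := c2'.symm

/-- Combining a `{1,3}`-inverse and a `{1,4}`-inverse yields the Moore–Penrose inverse. -/
private lemma mp_of (a p q : R) (hp1 : a * p * a = a) (hp3 : star (a * p) = a * p)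
    (hq1 : a * q * a = a) (hq4 : star (q * a) = q * a) :
    IsMPInverse a (q * a * p) := by
  have hq1' : a * (q * a) = a := by rw [← mul_assoc]; exact hq1
  have hax : a * (q * a * p) = a * p := by
    calc a * (q * a * p) = a * (q * a) * p := by simp only [mul_assoc]
      _ = a * p := by rw [hq1']
  have hxa : q * a * p * a = q * a := by
    calc q * a * p * a = q * (a * p * a) := by simp only [mul_assoc]
      _ = q * a := by rw [hp1]
  refine ⟨?_, ?_, ?_, ?_⟩
  · rw [hax]; exact hp1
  · rw [hxa]
    calc q * a * (q * a * p) = q * (a * (q * a * p)) := by simp only [mul_assoc]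
      _ = q * (a * p) := by rw [hax]
      _ = q * a * p := by rw [← mul_assoc]
  · rw [hax]; exact hp3
  · rw [hxa]; exact hq4

/-- If `a = a² u = v a²`, then `v a u` is a group inverse of `a`. -/
private lemma grp_of (a u v : R) (hu : a = a * a * u) (hv : a = v * (a * a)) :
    IsGroupInverse a (v * a * u) := by
  have hau : a * u = v * a := by
    calc a * u = v * (a * a) * u := by rw [← hv]
      _ = v * (a * a * u) := by simp only [mul_assoc]
      _ = v * a := by rw [← hu]
  have hava : a * (v * a) = a := by
    rw [← hau, ← mul_assoc, ← hu]
  have haua : a * u * a = a := by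
    rw [hau, mul_assoc]; exact hv.symm
  have l1 : a * (v * a * u) = a * u := by
    calc a * (v * a * u) = a * (v * a) * u := by simp only [mul_assoc]
      _ = a * u := by rw [hava]
  have l2 : v * a * u * a = a * u := by
    calc v * a * u * a = v * (a * u * a) := by simp only [mul_assoc]
      _ = v * a := by rw [haua]
      _ = a * u := hau.symm
  refine ⟨?_, ?_, ?_⟩
  · rw [l1]; exact haua
  · rw [l2, hau]
    calc v * a * (v * a * u) = v * (a * (v * a * u)) := by simp only [mul_assoc]
      _ = v * (a * u) := by rw [l1]
      _ = v * a * u := by rw [← mul_assoc]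
  · rw [l1, l2]

/-- Uniqueness of the Moore–Penrose inverse. -/
private lemma mp_unique (a x x' : R) (h : IsMPInverse a x) (h' : IsMPInverse a x') : x = x' := by
  obtain ⟨h1, h2, h3, h4⟩ := h
  obtain ⟨h1', h2', h3', h4'⟩ := h'
  have hax : a * x = a * x' := by
    calc a * x = a * x' * a * x := by conv_lhs => rw [← h1']
      _ = star (a * x') * star (a * x) := by rw [h3, h3']; simp only [mul_assoc]
      _ = star (a * x * (a * x')) := by rw [← star_mul]
      _ = star (a * x * a * x') := by simp only [mul_assoc]
      _ = star (a * x') := by rw [h1]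
      _ = a * x' := h3'
  have hxa : x * a = x' * a := by
    calc x * a = x * (a * x' * a) := by conv_lhs => rw [← h1']
      _ = star (x * a) * star (x' * a) := by rw [h4, h4']; simp only [mul_assoc]
      _ = star (x' * a * (x * a)) := by rw [← star_mul]
      _ = star (x' * (a * x * a)) := by simp only [mul_assoc]
      _ = star (x' * a) := by rw [h1]
      _ = x' * a := h4'
  calc x = x * a * x := h2.symm
    _ = x' * a * x := by rw [hxa]
    _ = x' * (a * x) := by rw [mul_assoc]
    _ = x' * (a * x') := by rw [hax]
    _ = x' * a * x' := by rw [← mul_assoc]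
    _ = x' := h2'

private lemma mp_star (a x : R) (h : IsMPInverse a x) : IsMPInverse (star a) (star x) := by
  obtain ⟨h1, h2, h3, h4⟩ := h
  refine ⟨?_, ?_, ?_, ?_⟩
  · rw [← star_mul, ← star_mul, ← mul_assoc, h1]
  · rw [← star_mul, ← star_mul, ← mul_assoc, h2]
  · rw [← star_mul, star_star]; exact h4.symm
  · rw [← star_mul, star_star]; exact h3.symm

private lemma grp_star (a y : R) (h : IsGroupInverse a y) : IsGroupInverse (star a) (star y) := by
  obtain ⟨g1, g2, g3⟩ := h
  refine ⟨?_, ?_, ?_⟩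
  · rw [← star_mul, ← star_mul, ← mul_assoc, g1]
  · rw [← star_mul, ← star_mul, ← mul_assoc, g2]
  · calc star a * star y = star (y * a) := by rw [← star_mul]
      _ = star (a * y) := by rw [g3]
      _ = star y * star a := by rw [star_mul]

/-- Forward direction: if `a` is MP-invertible and group invertible then
`a ∈ a (star a)^(m+1) R` for all `m`. -/
private lemma fwd (a x y : R) (hx : IsMPInverse a x) (hy : IsGroupInverse a y) :
    ∀ m : ℕ, ∃ r : R, a = a * (star a) ^ (m + 1) * r := by
  obtain ⟨h1, h2, h3, h4⟩ := hx
  obtain ⟨g1, g2, g3⟩ := hy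
  have ha2 : a * a * y = a := by
    calc a * a * y = a * (a * y) := by rw [mul_assoc]
      _ = a * (y * a) := by rw [g3]
      _ = a * y * a := by rw [← mul_assoc]
      _ = a := g1
  have hstar2 : star y * (star a * star a) = star a := by
    have h := congrArg star ha2
    simpa only [star_mul, mul_assoc] using h
  have hcomm : Commute (star y) (star a) := by
    have h := congrArg star g3
    simp only [star_mul] at h
    exact h
  intro m
  induction m with
  | zero =>
    refine ⟨star x, ?_⟩
    calc a = a * x * a := h1.symm
      _ = a * (x * a) := by rw [mul_assoc]
      _ = a * star (x * a) := by rw [h4]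
      _ = a * (star a * star x) := by rw [star_mul]
      _ = a * (star a) ^ (0 + 1) * star x := by rw [zero_add, pow_one, ← mul_assoc]
  | succ k ih =>
    obtain ⟨r, hr⟩ := ih
    refine ⟨star y * r, ?_⟩
    have hp : (star a) ^ (k + 2) = star a * star a * (star a) ^ k := by
      rw [show k + 2 = 2 + k from Nat.add_comm k 2, pow_add, pow_two]
    have hc : star y * (star a) ^ (k + 2) = (star a) ^ (k + 2) * star y :=
      (hcomm.pow_right (k + 2)).eq
    have hkey : star y * (star a) ^ (k + 2) = (star a) ^ (k + 1) := by
      calc star y * (star a) ^ (k + 2)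
          = star y * (star a * star a * (star a) ^ k) := by rw [hp]
        _ = star y * (star a * star a) * (star a) ^ k := by rw [← mul_assoc]
        _ = star a * (star a) ^ k := by rw [hstar2]
        _ = (star a) ^ (k + 1) := (pow_succ' _ _).symm
    calc a = a * (star a) ^ (k + 1) * r := hr
      _ = a * (star y * (star a) ^ (k + 2)) * r := by rw [hkey]
      _ = a * ((star a) ^ (k + 2) * star y) * r := by rw [hc]
      _ = a * (star a) ^ (k + 1 + 1) * (star y * r) := by simp only [mul_assoc]

private lemma rev_13 (a s t : R) (m : ℕ)
    (h1 : a = s * (star a) ^ (m + 2) * a) :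
    a * star (s * (star a) ^ (m + 1)) * a = a ∧
      star (a * star (s * (star a) ^ (m + 1))) = a * star (s * (star a) ^ (m + 1)) := by
  apply aux13
  calc a = s * (star a) ^ (m + 2) * a := h1
    _ = s * ((star a) ^ (m + 1) * star a) * a := by rw [pow_succ]
    _ = s * (star a) ^ (m + 1) * star a * a := by simp only [mul_assoc]

private lemma rev_14 (a s t : R) (m : ℕ)
    (h2 : a = a * (star a) ^ (m + 2) * t) :
    a * star ((star a) ^ (m + 1) * t) * a = a ∧
      star (star ((star a) ^ (m + 1) * t) * a) = star ((star a) ^ (m + 1) * t) * a := by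
  apply aux14
  calc a = a * (star a) ^ (m + 2) * t := h2
    _ = a * (star a * (star a) ^ (m + 1)) * t := by rw [pow_succ']
    _ = a * star a * ((star a) ^ (m + 1) * t) := by simp only [mul_assoc]

private lemma x_eq (a s t : R) (m : ℕ) :
    star ((star a) ^ (m + 1) * t) * a * star (s * (star a) ^ (m + 1))
      = star t * a ^ (2 * (m + 2) - 1) * star s := by
  rw [star_mul, star_mul, star_pow, star_star]
  have h : 2 * (m + 2) - 1 = m + 1 + 1 + (m + 1) := by omega
  rw [h, pow_add a (m+1+1) (m+1), pow_succ a (m+1)]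
  simp only [mul_assoc]

private lemma rev_grp (a s t : R) (m : ℕ)
    (h1 : a = s * (star a) ^ (m + 2) * a) (h2 : a = a * (star a) ^ (m + 2) * t) :
    (a = a * a * (a ^ m * (star s * a))) ∧ (a = a * star t * a ^ m * (a * a)) := by
  have hb : (star a) ^ (m + 2) = (star a) ^ (m + 1) * star a := pow_succ _ _
  have hb' : (star a) ^ (m + 2) = star a * (star a) ^ (m + 1) := pow_succ' _ _
  have ha2' : a ^ (m + 2) = a * a ^ (m + 1) := pow_succ' _ _
  have ha2'' : a ^ (m + 2) = a ^ (m + 1) * a := pow_succ _ _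
  have ha1' : a ^ (m + 1) = a * a ^ m := pow_succ' _ _
  have haX : a ^ (m + 2) = a ^ m * (a * a) := by
    rw [show m + 2 = m + (1 + 1) from rfl, pow_add, pow_add, pow_one]
  have hs : star a = star a * (a ^ (m + 2) * star s) := by
    have h := congrArg star h1
    simpa only [star_mul, star_pow, star_star, mul_assoc] using h
  have ht : star a = star t * (a ^ (m + 2) * star a) := by
    have h := congrArg star h2
    simpa only [star_mul, star_pow, star_star, mul_assoc] using h
  constructor
  · have hc : star a * a = star a * (a ^ (m + 2) * (star s * a)) := by
      conv_lhs => rw [hs]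
      simp only [mul_assoc]
    calc a = s * (star a) ^ (m + 2) * a := h1
      _ = s * ((star a) ^ (m + 1) * star a) * a := by rw [hb]
      _ = s * (star a) ^ (m + 1) * (star a * a) := by simp only [mul_assoc]
      _ = s * (star a) ^ (m + 1) * (star a * (a ^ (m + 2) * (star s * a))) := by rw [hc]
      _ = s * ((star a) ^ (m + 1) * star a) * (a ^ (m + 2) * (star s * a)) := by
          simp only [mul_assoc]
      _ = s * (star a) ^ (m + 2) * (a ^ (m + 2) * (star s * a)) := by rw [← hb]
      _ = s * (star a) ^ (m + 2) * (a * a ^ (m + 1) * (star s * a)) := by rw [ha2']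
      _ = s * (star a) ^ (m + 2) * a * (a ^ (m + 1) * (star s * a)) := by
          simp only [mul_assoc]
      _ = a * (a ^ (m + 1) * (star s * a)) := by rw [← h1]
      _ = a * (a * a ^ m * (star s * a)) := by rw [ha1']
      _ = a * a * (a ^ m * (star s * a)) := by simp only [mul_assoc]
  · have hd : a * star a = a * (star t * (a ^ (m + 2) * star a)) := by
      conv_lhs => rw [ht]
    calc a = a * (star a) ^ (m + 2) * t := h2
      _ = a * (star a * (star a) ^ (m + 1)) * t := by rw [hb']
      _ = a * star a * ((star a) ^ (m + 1) * t) := by simp only [mul_assoc]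
      _ = a * (star t * (a ^ (m + 2) * star a)) * ((star a) ^ (m + 1) * t) := by rw [hd]
      _ = a * star t * (a ^ (m + 2) * (star a * (star a) ^ (m + 1) * t)) := by
          simp only [mul_assoc]
      _ = a * star t * (a ^ (m + 2) * ((star a) ^ (m + 2) * t)) := by
          rw [← hb']
      _ = a * star t * (a ^ (m + 1) * a * ((star a) ^ (m + 2) * t)) := by rw [ha2'']
      _ = a * star t * (a ^ (m + 1) * (a * (star a) ^ (m + 2) * t)) := by
          simp only [mul_assoc]
      _ = a * star t * (a ^ (m + 1) * a) := by rw [← h2]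
      _ = a * star t * a ^ (m + 2) := by rw [← ha2'']
      _ = a * star t * (a ^ m * (a * a)) := by rw [haX]
      _ = a * star t * a ^ m * (a * a) := by simp only [mul_assoc]

end

theorem stmt_9 {R : Type*} [Ring R] [StarRing R] (a : R) (n : ℕ) (hn : 2 ≤ n) :
    (((∃ x : R, IsMPInverse a x) ∧ (∃ y : R, IsGroupInverse a y)) ↔
      ((∃ r : R, a = a * (star a) ^ n * r) ∧ (∃ r : R, a = r * (star a) ^ n * a))) ∧
    (∀ x s t : R, IsMPInverse a x → a = s * (star a) ^ n * a →
      a = a * (star a) ^ n * t → x = star t * a ^ (2 * n - 1) * star s) := by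
  obtain ⟨m, rfl⟩ : ∃ m, n = m + 2 := ⟨n - 2, by omega⟩
  have mkMP : ∀ s t : R, a = s * (star a) ^ (m + 2) * a → a = a * (star a) ^ (m + 2) * t →
      IsMPInverse a (star ((star a) ^ (m + 1) * t) * a * star (s * (star a) ^ (m + 1))) := by
    intro s t h1 h2
    obtain ⟨hp1, hp3⟩ := rev_13 a s t m h1
    obtain ⟨hq1, hq4⟩ := rev_14 a s t m h2
    exact mp_of a _ _ hp1 hp3 hq1 hq4
  refine ⟨⟨?_, ?_⟩, ?_⟩
  · rintro ⟨⟨x, hx⟩, ⟨y, hy⟩⟩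
    constructor
    · obtain ⟨r, hr⟩ := fwd a x y hx hy (m + 1)
      exact ⟨r, hr⟩
    · obtain ⟨r, hr⟩ := fwd (star a) (star x) (star y) (mp_star a x hx) (grp_star a y hy) (m + 1)
      refine ⟨star r, ?_⟩
      have h := congrArg star hr
      simpa only [star_mul, star_pow, star_star, mul_assoc] using h
  · rintro ⟨⟨t, h2⟩, ⟨s, h1⟩⟩
    obtain ⟨hu, hv⟩ := rev_grp a s t m h1 h2
    exact ⟨⟨_, mkMP s t h1 h2⟩, ⟨_, grp_of a _ _ hu hv⟩⟩
  · intro x s t hx h1 h2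
    have h := mp_unique a x _ hx (mkMP s t h1 h2)
    rw [h, x_eq]
end

section
/- Let R be a unital ring with involution, a ∈ R, and n ≥ 2. Then a is core invertible if and only if there exists a Hermitian element p (p* = p) such that pa = 0 and a^n + p is invertible. In that case, the core inverse of a is a^{n-1}(a^n + p)^{-1}. -/
namespace CoreAux

variable {R : Type*} [Ring R] [StarRing R]

theorem props {a x : R} (h : IsCoreInverse a x) :
    a * x * a = a ∧ star (a * x) = a * x ∧ a * x * x = x ∧ x * a * a = a ∧ x * a * x = x := by
  obtain ⟨h1, h2, h3⟩ := h
  obtain ⟨s, hs⟩ : ∃ s : R, x = a * s := by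
    have hmem : x ∈ {y : R | ∃ r : R, y = a * r} := by
      rw [← h2]; exact ⟨1, (mul_one x).symm⟩
    exact hmem
  obtain ⟨t, ht⟩ : ∃ t : R, a = x * t := by
    have hmem : a ∈ {y : R | ∃ r : R, y = x * r} := by
      rw [h2]; exact ⟨1, (mul_one a).symm⟩
    exact hmem
  obtain ⟨r, hr⟩ : ∃ r : R, x = r * star a := by
    have hmem : x ∈ {y : R | ∃ r : R, y = r * star a} := by
      rw [← h3]; exact ⟨1, (one_mul x).symm⟩
    exact hmem
  have hxstar : star x = a * star r := by rw [hr, star_mul, star_star]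
  have key : a * x * star x * star a = star (a * x) := by
    rw [hxstar]
    calc a * x * (a * star r) * star a = (a * x * a) * (star r * star a) := by
          simp only [mul_assoc]
      _ = a * (star r * star a) := by rw [h1]
      _ = star (a * x) := by
          rw [star_mul, hr, star_mul, star_star, mul_assoc]
  have selfadj : star (a * x * star x * star a) = a * x * star x * star a := by
    simp only [star_mul, star_star]
    simp only [mul_assoc]
  have hherm : star (a * x) = a * x := by
    conv_rhs => rw [← star_star (a * x), ← key]
    rw [selfadj, key]
  have hax2 : a * x * x = x := by
    nth_rewrite 2 [hs]
    calc a * x * (a * s) = (a * x * a) * s := by simp only [mul_assoc]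
      _ = a * s := by rw [h1]
      _ = x := hs.symm
  have haax : star a * (a * x) = star a := by
    conv_rhs => rw [← h1]
    rw [star_mul, hherm]
  have hxax : x * a * x = x := by
    nth_rewrite 1 [hr]
    calc r * star a * a * x = r * (star a * (a * x)) := by simp only [mul_assoc]
      _ = r * star a := by rw [haax]
      _ = x := hr.symm
  have hxa2 : x * a * a = a := by
    nth_rewrite 2 [ht]
    calc x * a * (x * t) = (x * a * x) * t := by simp only [mul_assoc]
      _ = x * t := by rw [hxax]
      _ = a := ht.symm
  exact ⟨h1, hherm, hax2, hxa2, hxax⟩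

theorem unique {a x y : R} (hx : IsCoreInverse a x) (hy : IsCoreInverse a y) : x = y := by
  obtain ⟨hx1, hx2, hx3, hx4, hx5⟩ := props hx
  obtain ⟨hy1, hy2, hy3, hy4, hy5⟩ := props hy
  have e1 : x = x * star x * star a := by
    conv_lhs => rw [← hx5]
    calc x * a * x = x * (a * x) := by rw [mul_assoc]
      _ = x * star (a * x) := by rw [hx2]
      _ = x * (star x * star a) := by rw [star_mul]
      _ = x * star x * star a := by rw [mul_assoc]
  have e2 : star a = star a * a * y := by
    conv_lhs => rw [← hy1]
    calc star (a * y * a) = star a * star (a * y) := by rw [star_mul]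
      _ = star a * (a * y) := by rw [hy2]
      _ = star a * a * y := by rw [mul_assoc]
  have e3 : x = x * a * y := by
    calc x = x * star x * star a := e1
      _ = x * star x * (star a * a * y) := by conv_lhs => rw [e2]
      _ = (x * star x * star a) * a * y := by simp only [mul_assoc]
      _ = x * a * y := by rw [← e1]
  have e4 : x * a * y = y := by
    conv_lhs => rw [← hy3]
    calc x * a * (a * y * y) = (x * a * a) * (y * y) := by simp only [mul_assoc]
      _ = a * (y * y) := by rw [hx4]
      _ = a * y * y := by rw [mul_assoc]
      _ = y := hy3
  exact e3.trans e4

theorem forward {a x : R} (h : IsCoreInverse a x) (k : ℕ) :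
    star (1 - a * x) = 1 - a * x ∧ (1 - a * x) * a = 0 ∧
      IsUnit (a ^ (k + 2) + (1 - a * x)) := by
  obtain ⟨h1, hherm, hax2, hxa2, hxax⟩ := props h
  have hpa : (1 - a * x) * a = 0 := by rw [sub_mul, one_mul, h1, sub_self]
  have hps : star (1 - a * x) = 1 - a * x := by rw [star_sub, star_one, hherm]
  have hpx : (1 - a * x) * x = 0 := by rw [sub_mul, one_mul, hax2, sub_self]
  have hxp : x * (1 - a * x) = 0 := by rw [mul_sub, mul_one, ← mul_assoc, hxax, sub_self]
  have haxax : a * x * (a * x) = a * x := by rw [← mul_assoc, h1]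
  have hpp : (1 - a * x) * (1 - a * x) = 1 - a * x := by
    calc (1 - a * x) * (1 - a * x) = 1 - a * x - a * x + a * x * (a * x) := by noncomm_ring
      _ = 1 - a * x - a * x + a * x := by rw [haxax]
      _ = 1 - a * x := by noncomm_ring
  have hax_pow : ∀ m : ℕ, a ^ (m + 1) * x ^ (m + 1) = a * x := by
    intro m; induction m with
    | zero => rw [pow_one, pow_one]
    | succ j ih =>
      have s1 : x ^ (j + 2) = x * x ^ (j + 1) := pow_succ' x (j + 1)
      have s2 : x ^ (j + 1) = x * x ^ j := pow_succ' x j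
      have s3 : a ^ (j + 2) = a ^ (j + 1) * a := pow_succ a (j + 1)
      have hx2 : a * x ^ (j + 2) = x ^ (j + 1) := by
        rw [s1, s2]
        calc a * (x * (x * x ^ j)) = (a * x * x) * x ^ j := by simp only [mul_assoc]
          _ = x * x ^ j := by rw [hax2]
      have step : a ^ (j + 2) * x ^ (j + 2) = a ^ (j + 1) * x ^ (j + 1) := by
        calc a ^ (j + 2) * x ^ (j + 2) = a ^ (j + 1) * (a * x ^ (j + 2)) := by
              rw [s3]; simp only [mul_assoc]
          _ = a ^ (j + 1) * x ^ (j + 1) := by rw [hx2]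
      exact step.trans ih
  have hxa_pow : ∀ m : ℕ, x ^ (m + 1) * a ^ (m + 1) = x * a := by
    intro m; induction m with
    | zero => rw [pow_one, pow_one]
    | succ j ih =>
      have s4 : a ^ (j + 2) = a * a ^ (j + 1) := pow_succ' a (j + 1)
      have s5 : a ^ (j + 1) = a * a ^ j := pow_succ' a j
      have s6 : x ^ (j + 2) = x ^ (j + 1) * x := pow_succ x (j + 1)
      have step : x ^ (j + 2) * a ^ (j + 2) = x ^ (j + 1) * a ^ (j + 1) := by
        calc x ^ (j + 2) * a ^ (j + 2) = (x ^ (j + 1) * x) * (a * (a * a ^ j)) := by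
              rw [s6, s4, s5]
          _ = x ^ (j + 1) * (x * a * a) * a ^ j := by simp only [mul_assoc]
          _ = x ^ (j + 1) * a * a ^ j := by rw [hxa2]
          _ = x ^ (j + 1) * a ^ (j + 1) := by rw [s5]; simp only [mul_assoc]
      exact step.trans ih
  have hax_pow2 : a ^ (k + 2) * x ^ (k + 2) = a * x := hax_pow (k + 1)
  have hxa_pow2 : x ^ (k + 2) * a ^ (k + 2) = x * a := hxa_pow (k + 1)
  refine ⟨hps, hpa, ?_⟩
  have hxa_n : a ^ (k + 2) * x * a = a ^ (k + 2) := by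
    have e : a ^ (k + 2) = a ^ (k + 1) * a := pow_succ a (k + 1)
    rw [e]
    calc a ^ (k + 1) * a * x * a = a ^ (k + 1) * (a * x * a) := by simp only [mul_assoc]
      _ = a ^ (k + 1) * a := by rw [h1]
  have hA : a ^ (k + 2) * ((1 - x * a) * (1 - a * x)) = 0 := by
    have expand : a ^ (k + 2) * ((1 - x * a) * (1 - a * x))
        = a ^ (k + 2) * (1 - a * x) - a ^ (k + 2) * x * a * (1 - a * x) := by noncomm_ring
    rw [expand, hxa_n, sub_self]
  have hpxn : (1 - a * x) * x ^ (k + 2) = 0 := by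
    have e : x ^ (k + 2) = x * x ^ (k + 1) := pow_succ' x (k + 1)
    rw [e, ← mul_assoc, hpx, zero_mul]
  have hB : (1 - a * x) * ((1 - x * a) * (1 - a * x)) = 1 - a * x := by
    have expand : (1 - a * x) * ((1 - x * a) * (1 - a * x))
        = (1 - a * x) * (1 - a * x) - ((1 - a * x) * x) * (a * (1 - a * x)) := by noncomm_ring
    rw [expand, hpx, hpp, zero_mul, sub_zero]
  have hxnp : x ^ (k + 2) * (1 - a * x) = 0 := by
    have e : x ^ (k + 2) = x ^ (k + 1) * x := pow_succ x (k + 1)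
    rw [e, mul_assoc, hxp, mul_zero]
  have hpan2 : (1 - a * x) * a ^ (k + 2) = 0 := by
    have e : a ^ (k + 2) = a * a ^ (k + 1) := pow_succ' a (k + 1)
    rw [e, ← mul_assoc, hpa, zero_mul]
  have hD : (1 - x * a) * (1 - a * x) = 1 - x * a := by
    have expand : (1 - x * a) * (1 - a * x) = 1 - a * x - x * a + (x * a * a) * x := by
      noncomm_ring
    rw [expand, hxa2]
    noncomm_ring
  refine ⟨⟨a ^ (k + 2) + (1 - a * x), x ^ (k + 2) + (1 - x * a) * (1 - a * x), ?_, ?_⟩, rfl⟩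
  · show (a ^ (k + 2) + (1 - a * x)) * (x ^ (k + 2) + (1 - x * a) * (1 - a * x)) = 1
    have expand1 : (a ^ (k + 2) + (1 - a * x)) * (x ^ (k + 2) + (1 - x * a) * (1 - a * x))
        = a ^ (k + 2) * x ^ (k + 2) + a ^ (k + 2) * ((1 - x * a) * (1 - a * x))
          + (1 - a * x) * x ^ (k + 2) + (1 - a * x) * ((1 - x * a) * (1 - a * x)) := by
      noncomm_ring
    rw [expand1, hax_pow2, hA, hpxn, hB]
    noncomm_ring
  · show (x ^ (k + 2) + (1 - x * a) * (1 - a * x)) * (a ^ (k + 2) + (1 - a * x)) = 1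
    have hC : (1 - x * a) * ((1 - a * x) * a ^ (k + 2)) = 0 := by rw [hpan2, mul_zero]
    have expand2 : (x ^ (k + 2) + (1 - x * a) * (1 - a * x)) * (a ^ (k + 2) + (1 - a * x))
        = x ^ (k + 2) * a ^ (k + 2) + x ^ (k + 2) * (1 - a * x)
          + (1 - x * a) * ((1 - a * x) * a ^ (k + 2))
          + (1 - x * a) * ((1 - a * x) * (1 - a * x)) := by
      noncomm_ring
    rw [expand2, hxa_pow2, hxnp, hC, hpp, hD]
    noncomm_ring

theorem backward {a p : R} (k : ℕ) (hp : star p = p) (hpa : p * a = 0)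
    (u : Rˣ) (hu : (u : R) = a ^ (k + 2) + p) :
    IsCoreInverse a (a ^ (k + 1) * (↑u⁻¹ : R)) := by
  set v : R := ↑u⁻¹ with hv
  have huv : (↑u : R) * v = 1 := u.mul_inv
  have hvu : v * (↑u : R) = 1 := u.inv_mul
  have hsap : star a * p = 0 := by
    have h := congrArg star hpa
    rw [star_mul, hp, star_zero] at h
    exact h
  have hsu : star (↑u : R) = (star a) ^ (k + 2) + p := by rw [hu, star_add, star_pow, hp]
  have hsup : star (↑u : R) * p = p * p := by
    rw [hsu, add_mul]
    have e : (star a) ^ (k + 2) = (star a) ^ (k + 1) * star a := pow_succ (star a) (k + 1)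
    have z : (star a) ^ (k + 2) * p = 0 := by rw [e, mul_assoc, hsap, mul_zero]
    rw [z, zero_add]
  have hpu : p * (↑u : R) = p * p := by
    rw [hu, mul_add]
    have e : a ^ (k + 2) = a * a ^ (k + 1) := pow_succ' a (k + 1)
    have z : p * a ^ (k + 2) = 0 := by rw [e, ← mul_assoc, hpa, zero_mul]
    rw [z, zero_add]
  have hsvu : star v * star (↑u : R) = 1 := by rw [← star_mul, huv, star_one]
  have hpv : p * v = star v * p := by
    calc p * v = (star v * star (↑u : R)) * (p * v) := by rw [hsvu, one_mul]
      _ = star v * ((star (↑u : R) * p) * v) := by simp only [mul_assoc]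
      _ = star v * ((p * (↑u : R)) * v) := by rw [hsup, hpu]
      _ = star v * (p * ((↑u : R) * v)) := by simp only [mul_assoc]
      _ = star v * p := by rw [huv, mul_one]
  have hpva : p * v * a = 0 := by rw [hpv, mul_assoc, hpa, mul_zero]
  have hanv : a ^ (k + 2) * v = 1 - p * v := by
    have h := huv
    rw [hu, add_mul] at h
    exact eq_sub_of_add_eq h
  have cherm0 : star (a ^ (k + 2) * v) = a ^ (k + 2) * v := by
    rw [hanv, star_sub, star_one, star_mul, hp, ← hpv]
  have hea : a ^ (k + 2) * v * a = a := by
    rw [hanv, sub_mul, one_mul, hpva, sub_zero]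
  have hax0 : a * (a ^ (k + 1) * v) = a ^ (k + 2) * v := by
    rw [show a ^ (k + 2) = a * a ^ (k + 1) from pow_succ' a (k + 1)]
    simp only [mul_assoc]
  have hua : (↑u : R) * a = a ^ (k + 3) := by
    rw [hu, add_mul, hpa, add_zero, show a ^ (k + 3) = a ^ (k + 2) * a from pow_succ a (k + 2)]
  have hva : v * a ^ (k + 3) = a := by rw [← hua, ← mul_assoc, hvu, one_mul]
  clear_value v
  set x₀ : R := a ^ (k + 1) * v with hx0
  clear_value x₀
  have c1 : a * x₀ * a = a := by rw [hax0]; exact hea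
  have cherm : star (a * x₀) = a * x₀ := by rw [hax0]; exact cherm0
  have hpva1 : p * v * a ^ (k + 1) = 0 := by
    rw [show a ^ (k + 1) = a * a ^ k from pow_succ' a k, ← mul_assoc, hpva, zero_mul]
  have c_axx : a * x₀ * x₀ = x₀ := by
    rw [hax0, hanv, sub_mul, one_mul]
    have z : p * v * x₀ = 0 := by rw [hx0, ← mul_assoc, hpva1, zero_mul]
    rw [z, sub_zero]
  have hfix : v * (a ^ (k + 2) * x₀) = x₀ := by
    rw [hx0]
    have e1 : a ^ (k + 2) * a ^ (k + 1) = a ^ (k + 3) * a ^ k := by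
      rw [← pow_add, ← pow_add]; congr 1; omega
    calc v * (a ^ (k + 2) * (a ^ (k + 1) * v)) = (v * (a ^ (k + 2) * a ^ (k + 1))) * v := by
          simp only [mul_assoc]
      _ = (v * (a ^ (k + 3) * a ^ k)) * v := by rw [e1]
      _ = ((v * a ^ (k + 3)) * a ^ k) * v := by simp only [mul_assoc]
      _ = (a * a ^ k) * v := by rw [hva]
      _ = a ^ (k + 1) * v := by rw [← pow_succ']
  have c_xaa : x₀ * a * a = a := by
    have e3a : a ^ (k + 3) = a ^ (k + 2) * a := pow_succ a (k + 2)
    have e3b : a ^ (k + 2) = a ^ (k + 1) * a := pow_succ a (k + 1)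
    calc x₀ * a * a = (v * (a ^ (k + 2) * x₀)) * a * a := by rw [hfix]
      _ = v * a ^ (k + 1) * (a * x₀ * a) * a := by
          rw [e3b]; simp only [mul_assoc]
      _ = v * a ^ (k + 1) * a * a := by rw [c1]
      _ = v * a ^ (k + 3) := by rw [e3a, e3b]; simp only [mul_assoc]
      _ = a := hva
  have c_xax : x₀ * a * x₀ = x₀ := by
    calc x₀ * a * x₀ = x₀ * a * (a * x₀ * x₀) := by rw [c_axx]
      _ = (x₀ * a * a) * (x₀ * x₀) := by simp only [mul_assoc]
      _ = a * (x₀ * x₀) := by rw [c_xaa]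
      _ = a * x₀ * x₀ := by rw [mul_assoc]
      _ = x₀ := c_axx
  refine ⟨c1, ?_, ?_⟩
  · ext y
    simp only [Set.mem_setOf_eq]
    constructor
    · rintro ⟨r, rfl⟩
      refine ⟨a ^ k * v * r, ?_⟩
      rw [hx0, show a ^ (k + 1) = a * a ^ k from pow_succ' a k]
      simp only [mul_assoc]
    · rintro ⟨r, rfl⟩
      refine ⟨a * (a * r), ?_⟩
      calc a * r = (x₀ * a * a) * r := by rw [c_xaa]
        _ = x₀ * (a * (a * r)) := by simp only [mul_assoc]
  · ext y
    simp only [Set.mem_setOf_eq]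
    have hxRa : x₀ = x₀ * star x₀ * star a := by
      conv_lhs => rw [← c_xax]
      calc x₀ * a * x₀ = x₀ * (a * x₀) := by rw [mul_assoc]
        _ = x₀ * star (a * x₀) := by rw [cherm]
        _ = x₀ * (star x₀ * star a) := by rw [star_mul]
        _ = x₀ * star x₀ * star a := by rw [mul_assoc]
    have hsaax : star a = star a * a * x₀ := by
      conv_lhs => rw [← c1]
      calc star (a * x₀ * a) = star a * star (a * x₀) := by rw [star_mul]
        _ = star a * (a * x₀) := by rw [cherm]
        _ = star a * a * x₀ := by rw [mul_assoc]
    constructor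
    · rintro ⟨r, rfl⟩
      refine ⟨r * (x₀ * star x₀), ?_⟩
      calc r * x₀ = r * (x₀ * star x₀ * star a) := by conv_lhs => rw [hxRa]
        _ = r * (x₀ * star x₀) * star a := by simp only [mul_assoc]
    · rintro ⟨r, rfl⟩
      refine ⟨r * (star a * a), ?_⟩
      calc r * star a = r * (star a * a * x₀) := by conv_lhs => rw [hsaax]
        _ = r * (star a * a) * x₀ := by simp only [mul_assoc]

end CoreAux

theorem stmt_10 {R : Type*} [Ring R] [StarRing R] (a : R) (n : ℕ) (hn : 2 ≤ n) :
    ((∃ x : R, IsCoreInverse a x) ↔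
      (∃ p : R, star p = p ∧ p * a = 0 ∧ IsUnit (a ^ n + p))) ∧
    (∀ (x p : R) (u : Rˣ), IsCoreInverse a x → star p = p → p * a = 0 →
      (u : R) = a ^ n + p → x = a ^ (n - 1) * (↑u⁻¹ : R)) := by
  obtain ⟨k, rfl⟩ : ∃ k, n = k + 2 := ⟨n - 2, by omega⟩
  constructor
  · constructor
    · rintro ⟨x, hx⟩
      obtain ⟨hps, hpa, hunit⟩ := CoreAux.forward hx k
      exact ⟨1 - a * x, hps, hpa, hunit⟩
    · rintro ⟨p, hp, hpa, hu⟩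
      obtain ⟨u, hu'⟩ := hu
      exact ⟨_, CoreAux.backward k hp hpa u hu'⟩
  · rintro x p u hx hp hpa hu
    have hb := CoreAux.backward k hp hpa u hu
    have h := CoreAux.unique hx hb
    exact h
end

section
/- Let R be a unital ring with involution and suppose a ∈ R is core invertible with core inverse a°. Then for every n ≥ 2, the element p = 1 - a a° is the unique projection satisfying pa = 0 and a^n + p invertible. -/
theorem stmt_11 {R : Type*} [Ring R] [StarRing R] (a c : R) (hc : IsCoreInverse a c) :
    ∀ n : ℕ, 2 ≤ n →
      (1 - a * c) ^ 2 = 1 - a * c ∧ star (1 - a * c) = 1 - a * c ∧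
      (1 - a * c) * a = 0 ∧ IsUnit (a ^ n + (1 - a * c)) ∧
      ∀ q : R, q ^ 2 = q → star q = q → q * a = 0 → IsUnit (a ^ n + q) →
        q = 1 - a * c := by
  obtain ⟨hca, hR, hL⟩ := hc
  -- c ∈ aR
  obtain ⟨s, hs⟩ : ∃ r : R, c = a * r := by
    have h : c ∈ {y : R | ∃ r : R, y = c * r} := ⟨1, (mul_one c).symm⟩
    rwa [hR] at h
  -- a ∈ cR
  obtain ⟨t, ht⟩ : ∃ r : R, a = c * r := by
    have h : a ∈ {y : R | ∃ r : R, y = a * r} := ⟨1, (mul_one a).symm⟩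
    rwa [← hR] at h
  -- c ∈ R (star a)
  obtain ⟨r, hr⟩ : ∃ r' : R, c = r' * star a := by
    have h : c ∈ {y : R | ∃ r' : R, y = r' * c} := ⟨1, (one_mul c).symm⟩
    rwa [hL] at h
  -- basic identity: a*c*c = c
  have hfc : a * c * c = c := by
    nth_rewrite 2 [hs]
    rw [← mul_assoc, hca, ← hs]
  -- star of hca
  have hsca : star a * star c * star a = star a := by
    have := congrArg star hca
    simpa [star_mul, mul_assoc] using this
  -- c = c * star c * star a
  have hccsa : c = c * star c * star a := by
    conv_lhs => rw [hr, ← hsca]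
    rw [hr]; noncomm_ring
  -- f := a*c is Hermitian
  have hfstar : star (a * c) = a * c := by
    have h1 : a * c = (a * c) * star (a * c) := by
      conv_lhs => rw [hccsa]
      rw [star_mul]; noncomm_ring
    calc star (a * c) = star ((a * c) * star (a * c)) := congrArg star h1
      _ = (a * c) * star (a * c) := by rw [star_mul, star_star]
      _ = a * c := h1.symm
  -- star a * (a*c) = star a
  have hsaf : star a * (a * c) = star a := by
    have h : star (star a * (a * c)) = a := by
      rw [star_mul, star_star, hfstar]
      exact hca
    calc star a * (a * c) = star (star (star a * (a * c))) := (star_star _).symm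
      _ = star a := by rw [h]
  -- c * (a*c) = c
  have hcf : c * (a * c) = c := by
    nth_rewrite 1 [hr]
    rw [mul_assoc, hsaf, ← hr]
  -- c * a * (a * c) = a * c
  have hcaf : c * a * (a * c) = a * c := by
    set v : R := a * (a * c) - t * c with hv
    have hcv : c * v = c * a * (a * c) - a * c := by
      have e : c * (t * c) = c * t * c := by noncomm_ring
      rw [hv, mul_sub, e, ← ht]
      noncomm_ring
    have hacv : a * c * v = 0 := by
      rw [hv, mul_sub]
      have h1 : a * c * (a * (a * c)) = a * (a * c) := by
        rw [show a * c * (a * (a * c)) = (a * c * a) * (a * c) from by noncomm_ring, hca]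
      have h2 : a * c * (t * c) = a * (a * c) := by
        have e : a * c * (t * c) = a * (c * t * c) := by noncomm_ring
        rw [e, ← ht]
      rw [h1, h2, sub_self]
    have hsav : star a * v = 0 := by
      calc star a * v = star a * (a * c) * v := by rw [hsaf]
        _ = star a * (a * c * v) := by noncomm_ring
        _ = 0 := by rw [hacv, mul_zero]
    have hcv0 : c * v = 0 := by rw [hr, mul_assoc, hsav, mul_zero]
    have hz : c * a * (a * c) - a * c = 0 := by rw [← hcv]; exact hcv0
    exact sub_eq_zero.mp hz
  -- c * a * a = a
  have hca2 : c * a * a = a := by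
    calc c * a * a = c * a * (a * c * a) := by rw [hca]
      _ = (c * a * (a * c)) * a := by noncomm_ring
      _ = a * c * a := by rw [hcaf]
      _ = a := hca
  intro n hn
  obtain ⟨m, rfl⟩ : ∃ m, n = m + 1 := ⟨n - 1, by omega⟩
  -- the four listed properties
  have hff : a * c * (a * c) = a * c := by rw [← mul_assoc, hca]
  have hP1 : (1 - a * c) ^ 2 = 1 - a * c := by
    calc (1 - a * c) ^ 2 = 1 - a * c - a * c + a * c * (a * c) := by noncomm_ring
      _ = 1 - a * c := by rw [hff]; noncomm_ring
  have hP2 : star (1 - a * c) = 1 - a * c := by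
    rw [star_sub, star_one, hfstar]
  have hP3 : (1 - a * c) * a = 0 := by
    rw [sub_mul, one_mul, hca, sub_self]
  -- key power identities
  have e1 : ∀ k : ℕ, a ^ (k + 1) * c ^ (k + 1) = a * c := by
    intro k
    induction k with
    | zero => rw [pow_one, pow_one]
    | succ k ih =>
      calc a ^ (k + 2) * c ^ (k + 2) = a * (a ^ (k + 1) * c ^ (k + 1)) * c := by
            rw [pow_succ' a (k + 1), pow_succ c (k + 1)]; noncomm_ring
        _ = a * (a * c) * c := by rw [ih]
        _ = a * (a * c * c) := by noncomm_ring
        _ = a * c := by rw [hfc]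
  have f1 : ∀ k : ℕ, c ^ (k + 1) * a ^ (k + 1) = c * a := by
    intro k
    induction k with
    | zero => rw [pow_one, pow_one]
    | succ k ih =>
      calc c ^ (k + 2) * a ^ (k + 2) = c * (c ^ (k + 1) * a ^ (k + 1)) * a := by
            rw [pow_succ' c (k + 1), pow_succ a (k + 1)]; noncomm_ring
        _ = c * (c * a) * a := by rw [ih]
        _ = c * (c * a * a) := by noncomm_ring
        _ = c * a := by rw [hca2]
  have e2 : a ^ (m + 1) * (c * a) = a ^ (m + 1) := by
    calc a ^ (m + 1) * (c * a) = a ^ m * (a * c * a) := by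
          rw [pow_succ a m]; noncomm_ring
      _ = a ^ m * a := by rw [hca]
      _ = a ^ (m + 1) := (pow_succ a m).symm
  have e3 : a * c * c ^ (m + 1) = c ^ (m + 1) := by
    calc a * c * c ^ (m + 1) = a * c * c * c ^ m := by
          rw [pow_succ' c m]; noncomm_ring
      _ = c * c ^ m := by rw [hfc]
      _ = c ^ (m + 1) := (pow_succ' c m).symm
  have e4 : a * c * (c * a) = c * a := by
    rw [← mul_assoc, hfc]
  have f2 : c ^ (m + 1) * (a * c) = c ^ (m + 1) := by
    calc c ^ (m + 1) * (a * c) = c ^ m * (c * (a * c)) := by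
          rw [pow_succ c m]; noncomm_ring
      _ = c ^ m * c := by rw [hcf]
      _ = c ^ (m + 1) := (pow_succ c m).symm
  have f3 : c * a * a ^ (m + 1) = a ^ (m + 1) := by
    calc c * a * a ^ (m + 1) = c * a * a * a ^ m := by
          rw [pow_succ' a m]; noncomm_ring
      _ = a * a ^ m := by rw [hca2]
      _ = a ^ (m + 1) := (pow_succ' a m).symm
  have hMN : (a ^ (m + 1) + (1 - a * c)) * (c ^ (m + 1) + (1 - c * a)) = 1 := by
    calc (a ^ (m + 1) + (1 - a * c)) * (c ^ (m + 1) + (1 - c * a))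
        = a ^ (m + 1) * c ^ (m + 1) + a ^ (m + 1) - a ^ (m + 1) * (c * a)
            + c ^ (m + 1) + 1 - c * a - a * c * c ^ (m + 1) - a * c
            + a * c * (c * a) := by noncomm_ring
      _ = a * c + a ^ (m + 1) - a ^ (m + 1)
            + c ^ (m + 1) + 1 - c * a - c ^ (m + 1) - a * c
            + c * a := by rw [e1, e2, e3, e4]
      _ = 1 := by noncomm_ring
  have hNM : (c ^ (m + 1) + (1 - c * a)) * (a ^ (m + 1) + (1 - a * c)) = 1 := by
    calc (c ^ (m + 1) + (1 - c * a)) * (a ^ (m + 1) + (1 - a * c))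
        = c ^ (m + 1) * a ^ (m + 1) + c ^ (m + 1) - c ^ (m + 1) * (a * c)
            + a ^ (m + 1) + 1 - a * c - c * a * a ^ (m + 1) - c * a
            + c * a * (a * c) := by noncomm_ring
      _ = c * a + c ^ (m + 1) - c ^ (m + 1)
            + a ^ (m + 1) + 1 - a * c - a ^ (m + 1) - c * a
            + a * c := by rw [f1, f2, f3, hcaf]
      _ = 1 := by noncomm_ring
  have hP4 : IsUnit (a ^ (m + 1) + (1 - a * c)) :=
    ⟨⟨a ^ (m + 1) + (1 - a * c), c ^ (m + 1) + (1 - c * a), hMN, hNM⟩, rfl⟩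
  refine ⟨hP1, hP2, hP3, hP4, ?_⟩
  -- uniqueness
  intro q hq2 hqs hqa hqu
  have hqq : q * q = q := by rw [← pow_two]; exact hq2
  have hpan : (1 - a * c) * a ^ (m + 1) = 0 := by
    calc (1 - a * c) * a ^ (m + 1) = (1 - a * c) * a * a ^ m := by
          rw [pow_succ' a m]; noncomm_ring
      _ = 0 := by rw [hP3, zero_mul]
  have hqp : q * (1 - a * c) = q := by
    rw [mul_sub, mul_one, ← mul_assoc, hqa, zero_mul, sub_zero]
  have hpq : (1 - a * c) * q = q := by
    have h := congrArg star hqp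
    rwa [star_mul, hqs, hP2] at h
  obtain ⟨u, hu⟩ := hqu
  have h1 : (1 - a * c) * (a ^ (m + 1) + q) = q := by
    rw [mul_add, hpan, hpq, zero_add]
  have h2 : 1 - a * c = q * ↑u⁻¹ := by
    calc 1 - a * c = (1 - a * c) * ↑u * ↑u⁻¹ := by
          rw [mul_assoc, u.mul_inv, mul_one]
      _ = q * ↑u⁻¹ := by rw [hu, h1]
  have h3 : q * (1 - a * c) = 1 - a * c := by
    rw [h2, ← mul_assoc, hqq]
  exact hqp.symm.trans h3
end

section
/- Let R be a unital ring with involution and a ∈ R. Then a is core invertible if and only if there exists a Hermitian element p such that pa = 0 and u = a + p is invertible. In that case, a° = u^{-1} a u^{-1} = (u*u)^{-1} a*. -/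
private lemma aux_rel {R : Type*} [Ring R] [StarRing R] {a x : R} (h : IsCoreInverse a x) :
    a * x * a = a ∧ star (a * x) = a * x ∧ a * (x * x) = x ∧ x * (a * a) = a ∧ x * a * x = x := by
  obtain ⟨h1, hS1, hS2⟩ := h
  have hx1 : x ∈ {y : R | ∃ r : R, y = x * r} := ⟨1, (mul_one x).symm⟩
  rw [hS1] at hx1
  obtain ⟨s, hs⟩ := hx1
  have ha1 : a ∈ {y : R | ∃ r : R, y = a * r} := ⟨1, (mul_one a).symm⟩
  rw [← hS1] at ha1
  obtain ⟨t, ht⟩ := ha1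
  have hx2 : x ∈ {y : R | ∃ r : R, y = r * x} := ⟨1, (one_mul x).symm⟩
  rw [hS2] at hx2
  obtain ⟨r, hr⟩ := hx2
  have t1 : x * star (a * x) = x := by
    calc x * star (a * x) = (r * star a) * star (a * x) := by rw [← hr]
      _ = r * (star a * star (a * x)) := by rw [mul_assoc]
      _ = r * star (a * x * a) := by rw [← star_mul]
      _ = r * star a := by rw [h1]
      _ = x := hr.symm
  have he : star (a * x) = a * x := by
    have t2 : (a * x) * star (a * x) = a * x := by
      rw [mul_assoc, t1]
    calc star (a * x) = star ((a * x) * star (a * x)) := by rw [t2]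
      _ = star (star (a * x)) * star (a * x) := by rw [star_mul]
      _ = (a * x) * star (a * x) := by rw [star_star]
      _ = a * x := t2
  have hxax : x * a * x = x := by
    have t3 := t1
    rw [he] at t3
    calc x * a * x = x * (a * x) := by rw [mul_assoc]
      _ = x := t3
  have hax2 : a * (x * x) = x := by
    calc a * (x * x) = a * x * x := by rw [mul_assoc]
      _ = a * x * (a * s) := by rw [← hs]
      _ = (a * x * a) * s := by simp only [mul_assoc]
      _ = a * s := by rw [h1]
      _ = x := hs.symm
  have hxa2 : x * (a * a) = a := by
    calc x * (a * a) = x * a * a := by rw [mul_assoc]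
      _ = x * a * (x * t) := by rw [← ht]
      _ = (x * a * x) * t := by simp only [mul_assoc]
      _ = x * t := by rw [hxax]
      _ = a := ht.symm
  exact ⟨h1, he, hax2, hxa2, hxax⟩

private lemma aux_pu {R : Type*} [Ring R] [StarRing R] {a p : R} (hp : star p = p)
    (hpa : p * a = 0) (u : Rˣ) (hu : (u : R) = a + p) :
    a * (↑u⁻¹ : R) * a = a ∧ star (a * (↑u⁻¹ : R)) = a * (↑u⁻¹ : R) ∧
      IsCoreInverse a ((↑u⁻¹ : R) * a * (↑u⁻¹ : R)) ∧
      star a = star (u : R) * (u : R) * ((↑u⁻¹ : R) * a * (↑u⁻¹ : R)) := by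
  set v : R := ↑u⁻¹ with hvdef
  have huv : (u : R) * v = 1 := u.mul_inv
  have hvu : v * (u : R) = 1 := u.inv_mul
  have hua : (u : R) * a = a * a := by rw [hu, add_mul, hpa, add_zero]
  have hva : v * (a * a) = a := by rw [← hua, ← mul_assoc, hvu, one_mul]
  have hap : star a * p = 0 := by rw [← hp, ← star_mul, hpa, star_zero]
  have hau : star a * (u : R) = star a * a := by rw [hu, mul_add, hap, add_zero]
  have hav : star a * a * v = star a := by rw [← hau, mul_assoc, huv, mul_one]
  have sva : star v * (star a * a) = a := by
    have h2 := congrArg star hav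
    simp only [star_mul, star_star] at h2
    exact h2
  have hava : a * v * a = a := by
    calc a * v * a = (star v * (star a * a)) * v * a := by rw [sva]
      _ = star v * (star a * a * v) * a := by simp only [mul_assoc]
      _ = star v * star a * a := by rw [hav]
      _ = star v * (star a * a) := by rw [mul_assoc]
      _ = a := sva
  have he' : star (a * v) = a * v := by
    calc star (a * v) = star v * star a := by rw [star_mul]
      _ = star v * (star a * a * v) := by rw [hav]
      _ = star v * (star a * a) * v := by simp only [mul_assoc]
      _ = a * v := by rw [sva]
  have hee' : (a * v) * (a * v) = a * v := by
    calc (a * v) * (a * v) = (a * v * a) * v := by simp only [mul_assoc]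
      _ = a * v := by rw [hava]
  have hax' : a * (v * a * v) = a * v := by
    calc a * (v * a * v) = (a * v * a) * v := by simp only [mul_assoc]
      _ = a * v := by rw [hava]
  have hx'a : (v * a * v) * a = v * a := by
    calc (v * a * v) * a = v * (a * v * a) := by simp only [mul_assoc]
      _ = v * a := by rw [hava]
  have hc1 : a * (v * a * v) * a = a := by rw [hax', hava]
  have hx'aa : (v * a * v) * (a * a) = a := by
    calc (v * a * v) * (a * a) = ((v * a * v) * a) * a := by simp only [mul_assoc]
      _ = (v * a) * a := by rw [hx'a]
      _ = v * (a * a) := by rw [mul_assoc]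
      _ = a := hva
  have hxvv : v * a * v = v * star v * star a := by
    calc v * a * v = v * (star v * (star a * a)) * v := by rw [sva]
      _ = (v * star v) * (star a * a * v) := by simp only [mul_assoc]
      _ = (v * star v) * star a := by rw [hav]
      _ = v * star v * star a := rfl
  have hsax : star a = star (u : R) * (u : R) * (v * a * v) := by
    have h3 : star (u : R) * (u : R) * (v * a * v) = star a := by
      calc star (u : R) * (u : R) * (v * a * v)
          = star (u : R) * (u : R) * (v * star v * star a) := by rw [hxvv]
        _ = star (u : R) * ((u : R) * v) * (star v * star a) := by simp only [mul_assoc]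
        _ = star (u : R) * (star v * star a) := by rw [huv, mul_one]
        _ = (star (u : R) * star v) * star a := by rw [← mul_assoc]
        _ = star (v * (u : R)) * star a := by rw [star_mul]
        _ = star a := by rw [hvu, star_one, one_mul]
    exact h3.symm
  have hpv : p * v = 1 - a * v := by
    have h4 : a * v + p * v = 1 := by rw [← add_mul, ← hu, huv]
    rw [← h4]; abel
  have hsvp : star v * p = 1 - a * v := by
    rw [← hp, ← star_mul, hpv, star_sub, star_one, he']
  have hsx' : star (v * a * v) = a * (v * star v) := by
    calc star (v * a * v) = star (v * star v * star a) := by rw [hxvv]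
      _ = star (star a) * star (v * star v) := by rw [star_mul]
      _ = a * (star (star v) * star v) := by rw [star_star, star_mul]
      _ = a * (v * star v) := by rw [star_star]
  have key1 : star (v * a * v) * (1 - a * v) = 0 := by
    calc star (v * a * v) * (1 - a * v)
        = (a * (v * star v)) * (p * v) := by rw [hsx', hpv]
      _ = (a * v) * ((star v * p) * v) := by simp only [mul_assoc]
      _ = (a * v) * ((1 - a * v) * v) := by rw [hsvp]
      _ = ((a * v) * (1 - a * v)) * v := by rw [← mul_assoc]
      _ = ((a * v) - (a * v) * (a * v)) * v := by rw [mul_sub, mul_one]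
      _ = 0 := by rw [hee', sub_self, zero_mul]
  have key2 : (1 - a * v) * (v * a * v) = 0 := by
    have h5 := congrArg star key1
    rw [star_mul, star_zero, star_sub, star_one, he', star_star] at h5
    exact h5
  have e'x' : v * a * v = a * (v * (v * a * v)) := by
    have h6 : (v * a * v) - (a * v) * (v * a * v) = 0 := by
      rw [← key2, sub_mul, one_mul]
    rw [sub_eq_zero] at h6
    calc v * a * v = (a * v) * (v * a * v) := h6
      _ = a * (v * (v * a * v)) := by simp only [mul_assoc]
  have hcore : IsCoreInverse a (v * a * v) := by
    refine ⟨hc1, ?_, ?_⟩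
    · ext y
      simp only [Set.mem_setOf_eq]
      constructor
      · rintro ⟨w, rfl⟩
        refine ⟨v * (v * a * v) * w, ?_⟩
        calc (v * a * v) * w = (a * (v * (v * a * v))) * w := by rw [← e'x']
          _ = a * (v * (v * a * v) * w) := by simp only [mul_assoc]
      · rintro ⟨w, rfl⟩
        refine ⟨a * a * w, ?_⟩
        calc a * w = ((v * a * v) * (a * a)) * w := by rw [hx'aa]
          _ = (v * a * v) * (a * a * w) := by simp only [mul_assoc]
    · ext y
      simp only [Set.mem_setOf_eq]
      constructor
      · rintro ⟨w, rfl⟩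
        refine ⟨w * (v * star v), ?_⟩
        calc w * (v * a * v) = w * (v * star v * star a) := by rw [hxvv]
          _ = w * (v * star v) * star a := by simp only [mul_assoc]
      · rintro ⟨w, rfl⟩
        refine ⟨w * (star (u : R) * (u : R)), ?_⟩
        calc w * star a = w * (star (u : R) * (u : R) * (v * a * v)) := by rw [← hsax]
          _ = w * (star (u : R) * (u : R)) * (v * a * v) := by simp only [mul_assoc]
  exact ⟨hava, he', hcore, hsax⟩

theorem stmt_12 {R : Type*} [Ring R] [StarRing R] (a : R) :
    ((∃ x : R, IsCoreInverse a x) ↔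
      (∃ p : R, star p = p ∧ p * a = 0 ∧ IsUnit (a + p))) ∧
    (∀ (x p : R) (u : Rˣ), IsCoreInverse a x → star p = p → p * a = 0 →
      (u : R) = a + p →
      x = (↑u⁻¹ : R) * a * (↑u⁻¹ : R) ∧
      x = Ring.inverse (star ((u : R)) * (u : R)) * star a) := by
  constructor
  · constructor
    · rintro ⟨x, hx⟩
      obtain ⟨h1, he, hax2, hxa2, hxax⟩ := aux_rel hx
      refine ⟨1 - a * x, ?_, ?_, ?_⟩
      · rw [star_sub, star_one, he]
      · rw [sub_mul, one_mul, h1, sub_self]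
      · refine ⟨⟨a + (1 - a * x), x + (1 - x * a), ?_, ?_⟩, rfl⟩
        · have expand : (a + (1 - a * x)) * (x + (1 - x * a)) =
              a - a * x * a + x + 1 - x * a - a * (x * x) + a * (x * x) * a := by
            noncomm_ring
          rw [expand, h1, hax2]
          abel
        · have expand : (x + (1 - x * a)) * (a + (1 - a * x)) =
              x - x * a * x + a + 1 - a * x - x * (a * a) + x * (a * a) * x := by
            noncomm_ring
          rw [expand, hxax, hxa2]
          abel
    · rintro ⟨p, hp, hpa, hU⟩
      obtain ⟨u, hu⟩ := hU
      exact ⟨_, (aux_pu hp hpa u hu).2.2.1⟩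
  · intro x p u hx hp hpa hu
    obtain ⟨h1, he, hax2, hxa2, hxax⟩ := aux_rel hx
    obtain ⟨hava, he', hcore, hsax⟩ := aux_pu hp hpa u hu
    set v : R := ↑u⁻¹ with hvdef
    have hvu : v * (u : R) = 1 := u.inv_mul
    have px0 : p * x = 0 := by rw [← hax2, ← mul_assoc, hpa, zero_mul]
    have ux : (u : R) * x = a * x := by rw [hu, add_mul, px0, add_zero]
    have xve : x = v * (a * x) := by rw [← ux, ← mul_assoc, hvu, one_mul]
    have ee' : a * x = a * v := by
      have e'e : (a * v) * (a * x) = a * x := by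
        calc (a * v) * (a * x) = (a * v * a) * x := by simp only [mul_assoc]
          _ = a * x := by rw [hava]
      have ee'2 : (a * x) * (a * v) = a * v := by
        calc (a * x) * (a * v) = (a * x * a) * v := by simp only [mul_assoc]
          _ = a * v := by rw [h1]
      calc a * x = star (a * x) := he.symm
        _ = star ((a * v) * (a * x)) := by rw [e'e]
        _ = star (a * x) * star (a * v) := by rw [star_mul]
        _ = (a * x) * (a * v) := by rw [he, he']
        _ = a * v := ee'2
    have hxav : x = v * a * v := by
      calc x = v * (a * x) := xve
        _ = v * (a * v) := by rw [ee']
        _ = v * a * v := by rw [mul_assoc]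
    refine ⟨hxav, ?_⟩
    have hS : IsUnit (star (u : R) * (u : R)) := u.isUnit.star.mul u.isUnit
    have hSx : star a = star (u : R) * (u : R) * x := by
      rw [← hxav] at hsax
      exact hsax
    calc x = 1 * x := (one_mul x).symm
      _ = (Ring.inverse (star (u : R) * (u : R)) * (star (u : R) * (u : R))) * x := by
          rw [Ring.inverse_mul_cancel _ hS]
      _ = Ring.inverse (star (u : R) * (u : R)) * (star (u : R) * (u : R) * x) := by
          simp only [mul_assoc]
      _ = Ring.inverse (star (u : R) * (u : R)) * star a := by rw [← hSx]
end

section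
/- Let R be a unital ring with involution and a ∈ R core invertible with core inverse a°. Then a + 1 - a a° is invertible with inverse a° + 1 - a° a. -/
theorem stmt_13 {R : Type*} [Ring R] [StarRing R] (a c : R) (hc : IsCoreInverse a c) :
    (a + 1 - a * c) * (c + 1 - c * a) = 1 ∧
      (c + 1 - c * a) * (a + 1 - a * c) = 1 := by
  obtain ⟨h1, h2, h3⟩ := hc
  -- c = a * s
  obtain ⟨s, hs⟩ : ∃ r : R, c = a * r := by
    have : c ∈ {y : R | ∃ r : R, y = c * r} := ⟨1, (mul_one c).symm⟩
    rwa [h2] at this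
  -- a = c * t
  obtain ⟨t, ht⟩ : ∃ r : R, a = c * r := by
    have : a ∈ {y : R | ∃ r : R, y = a * r} := ⟨1, (mul_one a).symm⟩
    rwa [← h2] at this
  -- c = u * star a
  obtain ⟨u, hu⟩ : ∃ r : R, c = r * star a := by
    have : c ∈ {y : R | ∃ r : R, y = r * c} := ⟨1, (one_mul c).symm⟩
    rwa [h3] at this
  have hstar : star a = star a * star c * star a := by
    conv_lhs => rw [← h1]
    simp [star_mul, mul_assoc]
  have hxx : c = c * star c * star a := by
    calc c = u * star a := hu
      _ = u * (star a * star c * star a) := by rw [← hstar]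
      _ = (u * star a) * star c * star a := by noncomm_ring
      _ = c * star c * star a := by rw [← hu]
  have h5 : a * c = (a * c) * star (a * c) := by
    calc a * c = a * (c * star c * star a) := by rw [← hxx]
      _ = (a * c) * star (a * c) := by rw [star_mul]; noncomm_ring
  have hsa : star (a * c) = a * c := by
    conv_lhs => rw [h5]
    rw [star_mul, star_star]
    exact h5.symm
  have hxax : c * a * c = c := by
    have : c = c * a * c := by
      calc c = c * star c * star a := hxx
        _ = c * star (a * c) := by rw [star_mul]; noncomm_ring
        _ = c * (a * c) := by rw [hsa]
        _ = c * a * c := by noncomm_ring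
    exact this.symm
  have hca2 : c * a * a = a := by
    calc c * a * a = c * a * (c * t) := by rw [← ht]
      _ = (c * a * c) * t := by noncomm_ring
      _ = c * t := by rw [hxax]
      _ = a := ht.symm
  have hac2 : a * c * c = c := by
    calc a * c * c = a * c * (a * s) := by rw [← hs]
      _ = (a * c * a) * s := by noncomm_ring
      _ = a * s := by rw [h1]
      _ = c := hs.symm
  constructor
  · have expand : (a + 1 - a * c) * (c + 1 - c * a) =
        1 + (a - a * c * a) + (c - a * c * c) * (1 - a) := by noncomm_ring
    rw [expand, h1, hac2]
    simp
  · have expand : (c + 1 - c * a) * (a + 1 - a * c) =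
        1 + (c - c * a * c) + (a - c * a * a) - (a - c * a * a) * c := by noncomm_ring
    rw [expand, hxax, hca2]
    simp
end

section
/- Let R be a Dedekind-finite unital ring with involution and a ∈ R. Then a is core invertible if and only if there exists a projection p such that pa = 0 and a*a + p is invertible. In that case, a° = (a*a + p)^{-1} a*. -/
private lemma core_facts {R : Type*} [Ring R] [StarRing R] {a x : R}
    (hx : IsCoreInverse a x) :
    a * x * a = a ∧ star (a * x) = a * x ∧ x * a * x = x ∧ x * a * a = a ∧
      star a * (a * x) = star a ∧ ∃ s : R, x = a * s := by
  obtain ⟨h1, hRid, hLid⟩ := hx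
  have hxmem : x ∈ {y : R | ∃ r : R, y = x * r} := ⟨1, (mul_one x).symm⟩
  rw [hRid] at hxmem
  obtain ⟨s, hs⟩ := hxmem
  have hamem : a ∈ {y : R | ∃ r : R, y = a * r} := ⟨1, (mul_one a).symm⟩
  rw [← hRid] at hamem
  obtain ⟨t, ht⟩ := hamem
  have hx2 : x ∈ {y : R | ∃ r : R, y = r * x} := ⟨1, (one_mul x).symm⟩
  rw [hLid] at hx2
  obtain ⟨r, hr⟩ := hx2
  have hA : star a * star (a * x) = star a := by
    have := congrArg star h1
    rwa [star_mul] at this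
  have hB : (a * x) * star (a * x) = a * x := by
    calc (a * x) * star (a * x) = a * r * (star a * star (a * x)) := by
          rw [hr]; noncomm_ring
      _ = a * r * star a := by rw [hA]
      _ = a * x := by rw [hr]; noncomm_ring
  have he : star (a * x) = a * x := by
    have h := congrArg star hB
    rw [star_mul, star_star, hB] at h
    exact h.symm
  have hsaax : star a * (a * x) = star a := by
    rw [← he]; exact hA
  have hxax : x * a * x = x := by
    calc x * a * x = r * (star a * (a * x)) := by rw [hr]; noncomm_ring
      _ = r * star a := by rw [hsaax]
      _ = x := hr.symm
  have hxa2 : x * a * a = a := by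
    calc x * a * a = x * a * (x * t) := by rw [← ht]
      _ = (x * a * x) * t := by noncomm_ring
      _ = x * t := by rw [hxax]
      _ = a := ht.symm
  exact ⟨h1, he, hxax, hxa2, hsaax, s, hs⟩

theorem stmt_14 {R : Type*} [Ring R] [StarRing R]
    (hdf : ∀ x y : R, x * y = 1 → y * x = 1) (a : R) :
    ((∃ x : R, IsCoreInverse a x) ↔
      (∃ p : R, p ^ 2 = p ∧ star p = p ∧ p * a = 0 ∧ IsUnit (star a * a + p))) ∧
    (∀ x p : R, IsCoreInverse a x → p ^ 2 = p → star p = p → p * a = 0 →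
      IsUnit (star a * a + p) → x = Ring.inverse (star a * a + p) * star a) := by
  constructor
  · constructor
    · -- forward direction
      rintro ⟨x, hx⟩
      obtain ⟨h1, he, hxax, hxa2, -, -⟩ := core_facts hx
      refine ⟨1 - a * x, ?_, ?_, ?_, ?_⟩
      · have e : (1 - a * x) ^ 2 = 1 - a * x - a * x + a * x * (a * x) := by noncomm_ring
        have e2 : a * x * (a * x) = a * x := by
          have e3 : a * x * (a * x) = a * x * a * x := by noncomm_ring
          rw [e3, h1]
        rw [e, e2]; abel
      · rw [star_sub, star_one, he]
      · have e : (1 - a * x) * a = a - a * x * a := by noncomm_ring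
        rw [e, h1, sub_self]
      · have hpa : (1 - a * x) * a = 0 := by
          have e : (1 - a * x) * a = a - a * x * a := by noncomm_ring
          rw [e, h1, sub_self]
        have hps : star (1 - a * x) = 1 - a * x := by rw [star_sub, star_one, he]
        have hsap : star a * (1 - a * x) = 0 := by
          have h := congrArg star hpa
          rwa [star_mul, hps, star_zero] at h
        have hγα : (x + 1 - x * a) * (a + (1 - a * x)) = 1 := by
          have e : (x + 1 - x * a) * (a + (1 - a * x)) =
              x * a + x - x * a * x + a + 1 - a * x - x * a * a - x * a + x * a * a * x := by
            noncomm_ring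
          rw [e, hxax, hxa2]; abel
        have hαγ : (a + (1 - a * x)) * (x + 1 - x * a) = 1 := hdf _ _ hγα
        have hαu : IsUnit (a + (1 - a * x)) := ⟨⟨_, _, hαγ, hγα⟩, rfl⟩
        have hpp : (1 - a * x) * (1 - a * x) = 1 - a * x := by
          have e : (1 - a * x) * (1 - a * x) = 1 - a * x - a * x + a * x * (a * x) := by
            noncomm_ring
          have e2 : a * x * (a * x) = a * x := by
            have e3 : a * x * (a * x) = a * x * a * x := by noncomm_ring
            rw [e3, h1]
          rw [e, e2]; abel
        have key : star a * a + (1 - a * x) =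
            star (a + (1 - a * x)) * (a + (1 - a * x)) := by
          have e : (star a + (1 - a * x)) * (a + (1 - a * x)) =
              star a * a + star a * (1 - a * x) + (1 - a * x) * a
                + (1 - a * x) * (1 - a * x) := by noncomm_ring
          rw [star_add, hps, e, hsap, hpa, hpp]; abel
        rw [key]
        exact (isUnit_star.mpr hαu).mul hαu
    · -- backward direction
      rintro ⟨p, hp2, hps, hpa, hu⟩
      set v : R := Ring.inverse (star a * a + p) with hv
      have hvu : v * (star a * a + p) = 1 := Ring.inverse_mul_cancel _ hu
      have huv : (star a * a + p) * v = 1 := Ring.mul_inverse_cancel _ hu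
      have hpp : p * p = p := by rw [← pow_two]; exact hp2
      have hsap : star a * p = 0 := by
        have h := congrArg star hpa
        rwa [star_mul, hps, star_zero] at h
      have hαu : (star a + p) * (a + p) = star a * a + p := by
        have e : (star a + p) * (a + p) =
            star a * a + star a * p + p * a + p * p := by noncomm_ring
        rw [e, hsap, hpa, hpp]; abel
      have h1' : (v * (star a + p)) * (a + p) = 1 := by
        rw [mul_assoc, hαu]; exact hvu
      have hDF : (a + p) * (v * (star a + p)) = 1 := hdf _ _ h1'
      have hE : a * (v * star a) + a * (v * p) + p * (v * star a) + p * (v * p) = 1 := by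
        have e : (a + p) * (v * (star a + p)) =
            a * (v * star a) + a * (v * p) + p * (v * star a) + p * (v * p) := by
          noncomm_ring
        rw [e] at hDF; exact hDF
      have z1 : p * (a * (v * star a)) = 0 := by rw [← mul_assoc, hpa, zero_mul]
      have z2 : p * (a * (v * p)) = 0 := by rw [← mul_assoc, hpa, zero_mul]
      have z3 : p * (p * (v * star a)) = p * (v * star a) := by rw [← mul_assoc, hpp]
      have z4 : p * (p * (v * p)) = p * (v * p) := by rw [← mul_assoc, hpp]
      have w1 : a * (v * star a) * p = 0 := by
        rw [mul_assoc, mul_assoc, hsap, mul_zero, mul_zero]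
      have w3 : p * (v * star a) * p = 0 := by
        rw [mul_assoc, mul_assoc, hsap, mul_zero, mul_zero]
      have w2 : a * (v * p) * p = a * (v * p) := by rw [mul_assoc, mul_assoc, hpp]
      have w4 : p * (v * p) * p = p * (v * p) := by rw [mul_assoc, mul_assoc, hpp]
      have hL : p * (v * star a) + p * (v * p) = p := by
        have h := congrArg (fun z => p * z) hE
        simp only [mul_add, mul_one] at h
        rw [z1, z2, z3, z4] at h
        simpa using h
      have hRR : a * (v * p) + p * (v * p) = p := by
        have h := congrArg (fun z => z * p) hE
        simp only [add_mul, one_mul] at h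
        rw [w1, w2, w3, w4] at h
        simpa using h
      have hq : p * (v * star a) = a * (v * p) := by
        have := hL.trans hRR.symm
        exact add_right_cancel this
      have hq0 : p * (v * star a) = 0 := by
        have h' : p * (v * star a) = p * (p * (v * star a)) := z3.symm
        rw [h', hq, z2]
      have havp : a * (v * p) = 0 := by rw [← hq, hq0]
      have hg : a * (v * star a) + p * (v * p) = 1 := by
        rw [havp, hq0] at hE; simpa using hE
      refine ⟨v * star a, ?_, ?_, ?_⟩
      · calc a * (v * star a) * a
            = a * (v * (star a * a + p)) - a * (v * p) := by noncomm_ring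
          _ = a := by rw [hvu, havp, mul_one, sub_zero]
      · have hxaR : v * star a = a * ((v * star a) * (v * star a)) := by
          calc v * star a = (a * (v * star a) + p * (v * p)) * (v * star a) := by
                rw [hg, one_mul]
            _ = a * ((v * star a) * (v * star a)) + p * v * (p * (v * star a)) := by
                noncomm_ring
            _ = a * ((v * star a) * (v * star a)) := by rw [hq0, mul_zero, add_zero]
        have hua : (star a * a + p) * a = star a * (a * a) := by
          have e : (star a * a + p) * a = star a * (a * a) + p * a := by noncomm_ring
          rw [e, hpa, add_zero]
        have ha2 : a = (v * star a) * (a * a) := by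
          calc a = (v * (star a * a + p)) * a := by rw [hvu, one_mul]
            _ = v * ((star a * a + p) * a) := by rw [mul_assoc]
            _ = v * (star a * (a * a)) := by rw [hua]
            _ = (v * star a) * (a * a) := by rw [← mul_assoc]
        ext y
        simp only [Set.mem_setOf_eq]
        constructor
        · rintro ⟨r, rfl⟩
          refine ⟨(v * star a) * (v * star a) * r, ?_⟩
          conv_lhs => rw [hxaR]
          rw [mul_assoc, mul_assoc]
        · rintro ⟨r, rfl⟩
          refine ⟨a * a * r, ?_⟩
          conv_lhs => rw [ha2]
          rw [mul_assoc, mul_assoc]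
      · have hux : (star a * a + p) * (v * star a) = star a := by
          rw [← mul_assoc, huv, one_mul]
        ext y
        simp only [Set.mem_setOf_eq]
        constructor
        · rintro ⟨r, rfl⟩
          exact ⟨r * v, by rw [mul_assoc]⟩
        · rintro ⟨r, rfl⟩
          refine ⟨r * (star a * a + p), ?_⟩
          rw [mul_assoc, hux]
  · -- uniqueness
    intro x p hx hp2 hps hpa hu
    obtain ⟨-, -, -, -, hsaax, s, hs⟩ := core_facts hx
    have hpx : p * x = 0 := by rw [hs, ← mul_assoc, hpa, zero_mul]
    have hux : (star a * a + p) * x = star a := by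
      have e : (star a * a + p) * x = star a * (a * x) + p * x := by noncomm_ring
      rw [e, hsaax, hpx, add_zero]
    calc x = (Ring.inverse (star a * a + p) * (star a * a + p)) * x := by
          rw [Ring.inverse_mul_cancel _ hu, one_mul]
      _ = Ring.inverse (star a * a + p) * ((star a * a + p) * x) := by rw [mul_assoc]
      _ = Ring.inverse (star a * a + p) * star a := by rw [hux]
end

section
/- Let R be a unital ring with involution, a ∈ R, and n ≥ 1. Then a is an EP element (Moore-Penrose invertible and group invertible with a† = a#) if and only if there exists a Hermitian element p such that pa = ap = 0 and a^n + p is invertible. -/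
lemma pow_mul_eq_zero' {R : Type*} [Ring R] {b c : R} (h : b * c = 0) {n : ℕ}
    (hn : 1 ≤ n) : b ^ n * c = 0 := by
  obtain ⟨m, rfl⟩ : ∃ m, n = m + 1 := ⟨n - 1, by omega⟩
  rw [pow_succ, mul_assoc, h, mul_zero]

lemma mul_pow_eq_zero' {R : Type*} [Ring R] {b c : R} (h : c * b = 0) {n : ℕ}
    (hn : 1 ≤ n) : c * b ^ n = 0 := by
  obtain ⟨m, rfl⟩ : ∃ m, n = m + 1 := ⟨n - 1, by omega⟩
  rw [pow_succ', ← mul_assoc, h, zero_mul]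

theorem stmt_15 {R : Type*} [Ring R] [StarRing R] (a : R) (n : ℕ) (hn : 1 ≤ n) :
    (∃ x : R, IsMPInverse a x ∧ IsGroupInverse a x) ↔
      (∃ p : R, star p = p ∧ p * a = 0 ∧ a * p = 0 ∧ IsUnit (a ^ n + p)) := by
  constructor
  · rintro ⟨x, ⟨h1, h2, h3, h4⟩, ⟨-, -, h5⟩⟩
    have hpa : (1 - a * x) * a = 0 := by
      rw [sub_mul, one_mul, h1, sub_self]
    have hap : a * (1 - a * x) = 0 := by
      rw [mul_sub, mul_one, h5, ← mul_assoc, h1, sub_self]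
    refine ⟨1 - a * x, by simp [star_sub, h3], hpa, hap, ?_⟩
    have hcom : Commute a x := h5
    have hidem : IsIdempotentElem (a * x) := by
      show (a * x) * (a * x) = a * x
      rw [← mul_assoc, h1]
    obtain ⟨m, rfl⟩ : ∃ m, n = m + 1 := ⟨n - 1, by omega⟩
    have hax : a ^ (m + 1) * x ^ (m + 1) = a * x := by
      rw [← hcom.mul_pow, hidem.pow_succ_eq]
    have hxa : x ^ (m + 1) * a ^ (m + 1) = a * x := by
      rw [← hcom.symm.mul_pow, h5.symm, hidem.pow_succ_eq]
    have hpx : (1 - a * x) * x = 0 := by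
      rw [sub_mul, one_mul, h5, h2, sub_self]
    have hxp : x * (1 - a * x) = 0 := by
      rw [mul_sub, mul_one, ← mul_assoc, h2, sub_self]
    have hpp : (1 - a * x) * (1 - a * x) = 1 - a * x := hidem.one_sub.eq
    have e1 : (a ^ (m + 1) + (1 - a * x)) * (x ^ (m + 1) + (1 - a * x)) = 1 := by
      rw [add_mul, mul_add, mul_add, hax, hpp,
        pow_mul_eq_zero' hap (Nat.le_add_left 1 m),
        mul_pow_eq_zero' hpx (Nat.le_add_left 1 m)]
      abel
    have e2 : (x ^ (m + 1) + (1 - a * x)) * (a ^ (m + 1) + (1 - a * x)) = 1 := by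
      rw [add_mul, mul_add, mul_add, hxa, hpp,
        pow_mul_eq_zero' hxp (Nat.le_add_left 1 m),
        mul_pow_eq_zero' hpa (Nat.le_add_left 1 m)]
      abel
    exact ⟨⟨_, _, e1, e2⟩, rfl⟩
  · rintro ⟨p, hp, hpa, hap, hu⟩
    obtain ⟨m, rfl⟩ : ∃ m, n = m + 1 := ⟨n - 1, by omega⟩
    obtain ⟨U, hU⟩ := hu
    set u : R := a ^ (m + 1) + p with hu_def
    set v : R := ((U⁻¹ : Rˣ) : R) with hv_def
    have huv : u * v = 1 := by rw [← hU]; exact U.mul_inv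
    have hvu : v * u = 1 := by rw [← hU]; exact U.inv_mul
    have hpan : p * a ^ (m + 1) = 0 := mul_pow_eq_zero' hpa hn
    have hanp : a ^ (m + 1) * p = 0 := pow_mul_eq_zero' hap hn
    have hau : a * u = a ^ (m + 2) := by
      rw [hu_def, mul_add, hap, add_zero, ← pow_succ']
    have hua : u * a = a ^ (m + 2) := by
      rw [hu_def, add_mul, hpa, add_zero, ← pow_succ]
    have cau : Commute a u := hau.trans hua.symm
    have cav : Commute a v := by
      have : Commute a (U : R) := by rw [hU]; exact cau
      exact this.units_inv_right
    have hpu : p * u = p * p := by rw [hu_def, mul_add, hpan, zero_add]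
    have hup : u * p = p * p := by rw [hu_def, add_mul, hanp, zero_add]
    have cpu : Commute p u := hpu.trans hup.symm
    have cpv : Commute p v := by
      have : Commute p (U : R) := by rw [hU]; exact cpu
      exact this.units_inv_right
    -- key identities
    have h1 : a ^ (m + 2) * v = a := by
      rw [← hau, mul_assoc, huv, mul_one]
    have key : a ^ (2 * m + 3) * (v * v) = a := by
      have : a ^ (2 * m + 3) = a ^ (m + 1) * a ^ (m + 2) := by
        rw [← pow_add]; congr 1; omega
      rw [this, mul_assoc, ← mul_assoc (a ^ (m + 2)) v v, h1, ← mul_assoc, ← pow_succ, h1]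
    set x : R := a ^ (2 * m + 1) * (v * v) with hx_def
    have hax : a * x = a ^ (2 * m + 2) * (v * v) := by
      rw [hx_def, ← mul_assoc, ← pow_succ']
    have hva : v * a = a * v := cav.symm.eq
    have hvva : (v * v) * a = a * (v * v) := by
      rw [mul_assoc, hva, ← mul_assoc, hva, mul_assoc]
    have hvvpow : ∀ k : ℕ, (v * v) * a ^ k = a ^ k * (v * v) := by
      intro k
      induction k with
      | zero => simp
      | succ k ih => rw [pow_succ, ← mul_assoc, ih, mul_assoc, hvva, ← mul_assoc]
    have hxa : x * a = a ^ (2 * m + 2) * (v * v) := by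
      rw [hx_def, mul_assoc, hvva, ← mul_assoc, ← pow_succ]
    have MP1 : a * x * a = a := by
      rw [hax, mul_assoc, hvva, ← mul_assoc, ← pow_succ]
      have : a ^ (2 * m + 2 + 1) = a ^ (2 * m + 3) := by norm_num
      rw [this, key]
    have MP2 : x * a * x = x := by
      rw [hxa, hx_def]
      calc a ^ (2 * m + 2) * (v * v) * (a ^ (2 * m + 1) * (v * v))
          = a ^ (2 * m + 2) * ((v * v) * a ^ (2 * m + 1)) * (v * v) := by
            simp only [mul_assoc]
        _ = a ^ (2 * m + 2) * a ^ (2 * m + 1) * ((v * v) * (v * v)) := by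
            rw [hvvpow]; simp only [mul_assoc]
        _ = a ^ (2 * m) * (a ^ (2 * m + 3) * (v * v)) * (v * v) := by
            rw [← pow_add]
            have h4 : 2 * m + 2 + (2 * m + 1) = 2 * m + (2 * m + 3) := by omega
            rw [h4, pow_add]
            simp only [mul_assoc]
        _ = a ^ (2 * m + 1) * (v * v) := by rw [key, ← pow_succ]
    -- the idempotent a * x equals 1 - p * p * (v * v)
    have hsq : u * u = a ^ (2 * m + 2) + p * p := by
      rw [hu_def, add_mul, mul_add, mul_add, hanp, hpan, ← pow_add]
      have : m + 1 + (m + 1) = 2 * m + 2 := by omega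
      rw [this]
      abel
    have he : a ^ (2 * m + 2) * (v * v) = 1 - p * p * (v * v) := by
      have h2 : a ^ (2 * m + 2) = u * u - p * p := by rw [hsq]; abel
      rw [h2, sub_mul]
      congr 1
      rw [mul_assoc, ← mul_assoc u v v, huv, one_mul, huv]
    -- star facts
    have hpsa : p * star a = 0 := by
      have := congrArg star hap
      simpa [star_mul, hp] using this
    have hsap : star a * p = 0 := by
      have := congrArg star hpa
      simpa [star_mul, hp] using this
    have hsu : star u = star a ^ (m + 1) + p := by
      rw [hu_def, star_add, star_pow, hp]
    have hpsu : p * star u = p * p := by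
      rw [hsu, mul_add, mul_pow_eq_zero' hpsa hn, zero_add]
    have hsup : star u * p = p * p := by
      rw [hsu, add_mul, pow_mul_eq_zero' hsap hn, zero_add]
    have hsuv : star u * star v = 1 := by rw [← star_mul, hvu, star_one]
    have hsvu : star v * star u = 1 := by rw [← star_mul, huv, star_one]
    have hpsv : p * star v = v * p := by
      calc p * star v = v * u * (p * star v) := by rw [hvu, one_mul]
        _ = v * (u * p) * star v := by simp only [mul_assoc]
        _ = v * (p * star u) * star v := by rw [hup, hpsu]
        _ = v * p * (star u * star v) := by simp only [mul_assoc]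
        _ = v * p := by rw [hsuv, mul_one]
    have hsvp : star v * p = p * v := by
      calc star v * p = star v * p * (u * v) := by rw [huv, mul_one]
        _ = star v * (p * u) * v := by simp only [mul_assoc]
        _ = star v * (star u * p) * v := by rw [hpu, hsup]
        _ = star v * star u * (p * v) := by simp only [mul_assoc]
        _ = p * v := by rw [hsvu, one_mul]
    have hpv : p * v = v * p := cpv.eq
    have hermit : star (p * p * (v * v)) = p * p * (v * v) := by
      calc star (p * p * (v * v))
          = star v * star v * (star p * star p) := by
            simp only [star_mul, mul_assoc]
        _ = star v * (star v * p) * p := by rw [hp]; simp only [mul_assoc]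
        _ = star v * (p * v) * p := by rw [hsvp]
        _ = (star v * p) * (v * p) := by simp only [mul_assoc]
        _ = (p * v) * (v * p) := by rw [hsvp]
        _ = p * ((v * v) * p) := by rw [mul_assoc, ← mul_assoc v v p]
        _ = p * (p * (v * v)) := by rw [← (cpv.mul_right cpv).eq]
        _ = p * p * (v * v) := by simp only [mul_assoc]
    have hstar_e : star (a ^ (2 * m + 2) * (v * v)) = a ^ (2 * m + 2) * (v * v) := by
      rw [he, star_sub, star_one, hermit]
    refine ⟨x, ⟨MP1, MP2, ?_, ?_⟩, ⟨MP1, MP2, ?_⟩⟩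
    · rw [hax, hstar_e]
    · rw [hxa, hstar_e]
    · rw [hax, hxa]
end

section
/- Let R be a unital ring with involution, a ∈ R regular with inner inverse a⁻ (a a⁻ a = a), and n ≥ 2. Then a is both core invertible and dual core invertible if and only if u = (a*)^n a + 1 - a⁻ a is invertible, if and only if v = a(a*)^n + 1 - a a⁻ is invertible. -/
section StmtAux

set_option linter.unusedSectionVars false
set_option maxHeartbeats 1000000

variable {R : Type*} [Ring R] [StarRing R]

private lemma aux_jacobR (x y z : R) (h : (1 + x*y)*z = 1) : (1 + y*x)*(1 - y*z*x) = 1 := by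
  have e : (1 + y*x)*(1 - y*z*x) = 1 + y*x - y*((1+x*y)*z)*x := by noncomm_ring
  rw [e, h]; noncomm_ring

private lemma aux_jacobL (x y z : R) (h : z*(1 + x*y) = 1) : (1 - y*z*x)*(1 + y*x) = 1 := by
  have e : (1 - y*z*x)*(1 + y*x) = 1 + y*x - y*(z*(1+x*y))*x := by noncomm_ring
  rw [e, h]; noncomm_ring

private lemma aux_jacobson (x y : R) (h : IsUnit (1 + x*y)) : IsUnit (1 + y*x) := by
  rw [isUnit_iff_exists] at h ⊢
  obtain ⟨z, hz1, hz2⟩ := h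
  exact ⟨1 - y*z*x, aux_jacobR x y z hz1, aux_jacobL x y z hz2⟩

private lemma aux_ideal_right_eq {x b : R} (h1 : ∃ p, x = b * p) (h2 : ∃ q, b = x * q) :
    {y : R | ∃ r : R, y = x * r} = {y : R | ∃ r : R, y = b * r} := by
  obtain ⟨p, hp⟩ := h1; obtain ⟨q, hq⟩ := h2
  ext z; simp only [Set.mem_setOf_eq]
  constructor
  · rintro ⟨r, rfl⟩; exact ⟨p * r, by rw [hp, mul_assoc]⟩
  · rintro ⟨r, rfl⟩; exact ⟨q * r, by rw [hq, mul_assoc]⟩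

private lemma aux_ideal_left_eq {x b : R} (h1 : ∃ p, x = p * b) (h2 : ∃ q, b = q * x) :
    {y : R | ∃ r : R, y = r * x} = {y : R | ∃ r : R, y = r * b} := by
  obtain ⟨p, hp⟩ := h1; obtain ⟨q, hq⟩ := h2
  ext z; simp only [Set.mem_setOf_eq]
  constructor
  · rintro ⟨r, rfl⟩; exact ⟨r * p, by rw [hp, ← mul_assoc]⟩
  · rintro ⟨r, rfl⟩; exact ⟨r * q, by rw [hq, ← mul_assoc]⟩

private lemma aux_mem_right {x b : R}
    (h : {y : R | ∃ r : R, y = x * r} = {y : R | ∃ r : R, y = b * r}) :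
    (∃ p, x = b * p) ∧ (∃ q, b = x * q) := by
  rw [Set.ext_iff] at h
  exact ⟨(h x).mp ⟨1, (mul_one x).symm⟩, (h b).mpr ⟨1, (mul_one b).symm⟩⟩

private lemma aux_mem_left {x b : R}
    (h : {y : R | ∃ r : R, y = r * x} = {y : R | ∃ r : R, y = r * b}) :
    (∃ p, x = p * b) ∧ (∃ q, b = q * x) := by
  rw [Set.ext_iff] at h
  exact ⟨(h x).mp ⟨1, (one_mul x).symm⟩, (h b).mpr ⟨1, (one_mul b).symm⟩⟩

private lemma aux_thirteen (a t : R) (h : t * (star a * a) = a) :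
    (a * star t) * a = a ∧ star (a * star t) = a * star t ∧ a * star t = t * star a := by
  have key : star a * a * star t = star a := by
    have h' := congrArg star h
    simp only [star_mul, star_star] at h'
    exact h'
  have e1 : a * star t = t * star a := by
    calc a * star t = (t * (star a * a)) * star t := by rw [h]
    _ = t * (star a * a * star t) := by noncomm_ring
    _ = t * star a := by rw [key]
  refine ⟨?_, ?_, e1⟩
  · calc a * star t * a = (t * star a) * a := by rw [e1]
    _ = t * (star a * a) := by rw [mul_assoc]
    _ = a := h
  · calc star (a * star t) = t * star a := by rw [star_mul, star_star]
    _ = a * star t := e1.symm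

private lemma aux_fourteen (a s : R) (h : a * (star a * s) = a) :
    (a * star s) * a = a ∧ star (star s * a) = star s * a ∧ star s * a = star a * s := by
  have key : star s * (a * star a) = star a := by
    have h' := congrArg star h
    simp only [star_mul, star_star] at h'
    calc star s * (a * star a) = star s * a * star a := by rw [mul_assoc]
    _ = star a := h'
  have e1 : star s * a = star a * s := by
    calc star s * a = star s * (a * (star a * s)) := by rw [h]
    _ = star s * (a * star a) * s := by noncomm_ring
    _ = star a * s := by rw [key]
  refine ⟨?_, ?_, e1⟩
  · calc a * star s * a = a * (star s * a) := by rw [mul_assoc]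
    _ = a * (star a * s) := by rw [e1]
    _ = a := h
  · calc star (star s * a) = star a * s := by rw [star_mul, star_star]
    _ = star s * a := e1.symm

private lemma aux_rightInv (a c d m : R) (hc : a * (c * a) = a) (hm : a * (d * (a * m)) = a) :
    (d * a + 1 - c * a) * (c * (a * m) + (1 - c * a) * (1 - d * (a * (c * (a * m))))) = 1 := by
  have h1 : (d*a + 1 - c*a) * (c*a) = d*a := by
    calc (d*a + 1 - c*a) * (c*a) = d*(a*(c*a)) + c*a - c*(a*(c*a)) := by noncomm_ring
    _ = d*a + c*a - c*a := by rw [hc]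
    _ = d*a := by noncomm_ring
  have h2 : (d*a + 1 - c*a) * (1 - c*a) = 1 - c*a := by
    calc (d*a + 1 - c*a) * (1 - c*a)
        = d*a + 1 - c*a - (d*(a*(c*a)) + c*a - c*(a*(c*a))) := by noncomm_ring
    _ = d*a + 1 - c*a - (d*a + c*a - c*a) := by rw [hc]
    _ = 1 - c*a := by noncomm_ring
  have h3 : a * (c * (a*m)) = a * m := by
    calc a * (c * (a*m)) = (a*(c*a))*m := by noncomm_ring
    _ = a * m := by rw [hc]
  calc (d * a + 1 - c * a) * (c * (a * m) + (1 - c * a) * (1 - d * (a * (c * (a * m)))))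
      = ((d*a + 1 - c*a) * (c*a))*m
        + ((d*a + 1 - c*a) * (1 - c*a)) * (1 - d * (a * (c * (a * m)))) := by noncomm_ring
  _ = (d*a)*m + (1 - c*a) * (1 - d * (a * (c * (a * m)))) := by rw [h1, h2]
  _ = (d*a)*m + (1 - c*a) * (1 - d * (a*m)) := by rw [h3]
  _ = d*(a*m) + 1 - d*(a*m) - c*a + c*(a*(d*(a*m))) := by noncomm_ring
  _ = d*(a*m) + 1 - d*(a*m) - c*a + c*a := by rw [hm]
  _ = 1 := by noncomm_ring

private lemma aux_forward_m (a X Y : R) (n : ℕ) (hn : 1 ≤ n)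
    (haXa : a * X * a = a)
    (hXr : ∃ r, X = r * star a)
    (haYa : a * Y * a = a)
    (hYp : ∃ p, Y = p * a)
    (hqY : ∃ q, a = q * Y)
    (hYr : ∃ r, Y = star a * r) :
    ∃ m, a * ((star a)^n * (a * m)) = a := by
  obtain ⟨r₀, hr₀⟩ := hXr
  obtain ⟨p₁, hp₁⟩ := hYp
  obtain ⟨q₁, hq₁⟩ := hqY
  obtain ⟨r₁, hr₁⟩ := hYr
  have hsX : star a * (star X * star a) = star a := by
    have h' := congrArg star haXa
    simp only [star_mul, star_star] at h'
    exact h'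
  have hXXe : X = X * (star X * star a) := by
    calc X = r₀ * star a := hr₀
    _ = r₀ * (star a * (star X * star a)) := by rw [hsX]
    _ = (r₀ * star a) * (star X * star a) := by rw [mul_assoc]
    _ = X * (star X * star a) := by rw [← hr₀]
  have hEstar : a * X = (a * X) * star (a * X) := by
    calc a * X = a * (X * (star X * star a)) := by rw [← hXXe]
    _ = (a * X) * (star X * star a) := by noncomm_ring
    _ = (a * X) * star (a * X) := by rw [star_mul]
  have hsE : star (a * X) = a * X := by
    calc star (a * X) = star ((a * X) * star (a * X)) := by rw [← hEstar]
    _ = star (star (a * X)) * star (a * X) := star_mul _ _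
    _ = (a * X) * star (a * X) := by rw [star_star]
    _ = a * X := hEstar.symm
  have hEa : (a * X) * a = a := haXa
  have hsaE : star a * (a * X) = star a := by
    calc star a * (a * X) = star a * star (a * X) := by rw [hsE]
    _ = star ((a * X) * a) := (star_mul _ _).symm
    _ = star a := by rw [hEa]
  have hsY : star a * (star Y * star a) = star a := by
    have h' := congrArg star haYa
    simp only [star_mul, star_star] at h'
    exact h'
  have hYsY : Y = star a * (star Y * Y) := by
    calc Y = star a * r₁ := hr₁
    _ = (star a * (star Y * star a)) * r₁ := by rw [hsY]
    _ = star a * (star Y * (star a * r₁)) := by noncomm_ring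
    _ = star a * (star Y * Y) := by rw [← hr₁]
  have hf1 : Y * a = (star a * star Y) * (Y * a) := by
    nth_rewrite 1 [hYsY]; noncomm_ring
  have hf2 : Y * a = star (Y * a) * (Y * a) := by rw [star_mul]; exact hf1
  have hsf : star (Y * a) = Y * a := by
    calc star (Y * a) = star (star (Y*a) * (Y*a)) := by rw [← hf2]
    _ = star (Y*a) * star (star (Y*a)) := star_mul _ _
    _ = star (Y*a) * (Y*a) := by rw [star_star]
    _ = Y * a := hf2.symm
  have hfB : Y * a = star a * star Y := by
    calc Y * a = star (Y * a) := hsf.symm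
    _ = star a * star Y := star_mul _ _
  have haf : a * (Y * a) = a := by rw [← mul_assoc]; exact haYa
  have hfY : (Y * a) * Y = Y := by
    calc (Y * a) * Y = (star a * star Y) * Y := by rw [hfB]
    _ = star a * (star Y * Y) := by rw [mul_assoc]
    _ = Y := hYsY.symm
  have hyya : Y * (Y * a) = Y := by
    nth_rewrite 1 [hp₁]
    calc (p₁ * a) * (Y * a) = p₁ * (a * Y * a) := by noncomm_ring
    _ = p₁ * a := by rw [haYa]
    _ = Y := hp₁.symm
  have ha2y : a * (a * Y) = a := by
    nth_rewrite 1 [hq₁]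
    calc (q₁ * Y) * (a * Y) = q₁ * ((Y * a) * Y) := by noncomm_ring
    _ = q₁ * Y := by rw [hfY]
    _ = a := hq₁.symm
  have hag : a * (a * (Y * Y)) = a * Y := by
    calc a * (a * (Y * Y)) = (a * (a * Y)) * Y := by noncomm_ring
    _ = a * Y := by rw [ha2y]
  have hga : (a * (Y * Y)) * a = a * Y := by
    calc (a * (Y * Y)) * a = a * (Y * (Y * a)) := by noncomm_ring
    _ = a * Y := by rw [hyya]
  have hgc : a * (a * (Y * Y)) = (a * (Y * Y)) * a := hag.trans hga.symm
  have I3s : star Y * star a = star a * star (a * (Y * Y)) := by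
    calc star Y * star a = star (a * Y) := (star_mul _ _).symm
    _ = star ((a * (Y*Y)) * a) := by rw [← hga]
    _ = star a * star (a * (Y * Y)) := star_mul _ _
  have hc4 : Commute (star (a * (Y * Y))) (star a) := by
    show star (a*(Y*Y)) * star a = star a * star (a*(Y*Y))
    calc star (a*(Y*Y)) * star a = star (a * (a*(Y*Y))) := (star_mul _ _).symm
    _ = star ((a*(Y*Y)) * a) := by rw [hgc]
    _ = star a * star (a*(Y*Y)) := star_mul _ _
  have commk : ∀ k : ℕ, (star (a * (Y * Y)))^k * star a = star a * (star (a * (Y * Y)))^k :=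
    fun k => (hc4.pow_left k).eq
  have Bpow : ∀ k : ℕ, (Y*a)^(k+1) =
      (star a)^(k+1) * ((star (a * (Y * Y)))^k * star Y) := by
    intro k
    induction k with
    | zero => simp [hfB]
    | succ k ih =>
      have e1 : (Y*a)^(k+1+1) = (Y*a)^(k+1) * (Y*a) := pow_succ _ _
      rw [e1, ih, hfB]
      generalize hA : (star a)^(k+1) = A
      generalize hG : (star (a * (Y * Y)))^k = GK
      have e2 : A * (GK * star Y) * (star a * star Y)
          = A * (GK * ((star Y * star a) * star Y)) := by noncomm_ring
      rw [e2, I3s]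
      have e3 : A * (GK * (star a * star (a * (Y * Y)) * star Y))
          = A * ((GK * star a) * (star (a * (Y * Y)) * star Y)) := by noncomm_ring
      rw [e3, ← hG, commk, hG]
      have e4 : A * (star a * GK * (star (a * (Y * Y)) * star Y))
          = (A * star a) * ((GK * star (a * (Y * Y))) * star Y) := by noncomm_ring
      rw [e4, ← hA, ← hG, ← pow_succ, ← pow_succ]
  have afk : ∀ k : ℕ, a * (Y*a)^(k+1) = a := by
    intro k
    induction k with
    | zero => simpa using haf
    | succ k ih =>
      have e1 : (Y*a)^(k+1+1) = (Y*a) * (Y*a)^(k+1) := pow_succ' _ _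
      rw [e1, ← mul_assoc]
      have h : a * (Y*a) = a := haf
      rw [h, ih]
  have hn1 : n - 1 + 1 = n := by omega
  have Pn : a * ((star a)^n * ((star (a * (Y * Y)))^(n-1) * star Y)) = a := by
    have h := afk (n-1)
    rw [Bpow (n-1), hn1, ← mul_assoc] at h
    rw [← mul_assoc]; exact h
  refine ⟨X * ((star (a * (Y * Y)))^(n-1) * star Y), ?_⟩
  have hpow : (star a)^(n-1) * star a = (star a)^n := by
    rw [← pow_succ, hn1]
  calc a * ((star a)^n * (a * (X * ((star (a * (Y * Y)))^(n-1) * star Y))))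
      = a * (((star a)^(n-1) * star a) * (a * (X * ((star (a * (Y * Y)))^(n-1) * star Y)))) := by
        rw [hpow]
  _ = a * ((star a)^(n-1) * ((star a * (a * X)) * ((star (a * (Y * Y)))^(n-1) * star Y))) := by
        noncomm_ring
  _ = a * ((star a)^(n-1) * (star a * ((star (a * (Y * Y)))^(n-1) * star Y))) := by rw [hsaE]
  _ = a * (((star a)^(n-1) * star a) * ((star (a * (Y * Y)))^(n-1) * star Y)) := by
        noncomm_ring
  _ = a * ((star a)^n * ((star (a * (Y * Y)))^(n-1) * star Y)) := by rw [hpow]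
  _ = a := Pn

private lemma aux_backward (a c : R) (hreg' : a * (c * a) = a) (n : ℕ) (hn : 2 ≤ n)
    (w : R) (hw1 : w * ((star a)^n * a + 1 - c * a) = 1)
    (hw2 : ((star a)^n * a + 1 - c * a) * w = 1) :
    (∃ X, a * X * a = a ∧ (∃ p, X = a * p) ∧ (∃ q, a = X * q) ∧
      (∃ p', X = p' * star a) ∧ (∃ q', star a = q' * X)) ∧
    (∃ Y, a * Y * a = a ∧ (∃ p, Y = p * a) ∧ (∃ q, a = q * Y) ∧
      (∃ p', Y = star a * p') ∧ (∃ q', star a = Y * q')) := by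
  have hd2 : (star a)^(n-1) * star a = (star a)^n := by
    rw [← pow_succ]; congr 1; omega
  have hd2' : star a * (star a)^(n-1) = (star a)^n := by
    rw [← pow_succ']; congr 1; omega
  have hd33 : (star a * star a) * (star a)^(n-2) = (star a)^n := by
    rw [← sq, ← pow_add]; congr 1; omega
  have hd33' : (star a)^(n-2) * (star a * star a) = (star a)^n := by
    rw [← sq, ← pow_add]; congr 1; omega
  set D := (star a)^n with hD
  set D2 := (star a)^(n-1) with hD2
  set D3 := (star a)^(n-2) with hD3
  set U := D * a + 1 - c * a with hU
  have h1 : U * (c*a) = D * a := by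
    rw [hU]
    calc (D*a + 1 - c*a) * (c*a) = D*(a*(c*a)) + c*a - c*(a*(c*a)) := by noncomm_ring
    _ = D*a + c*a - c*a := by rw [hreg']
    _ = D*a := by noncomm_ring
  have hca : c * a = w * (D * a) := by
    calc c * a = (w * U) * (c*a) := by rw [hw1, one_mul]
    _ = w * (U * (c*a)) := by rw [mul_assoc]
    _ = w * (D*a) := by rw [h1]
  have hau : a * U = a * (D*a) := by
    rw [hU]
    calc a * (D*a + 1 - c*a) = a*(D*a) + a - a*(c*a) := by noncomm_ring
    _ = a*(D*a) + a - a := by rw [hreg']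
    _ = a*(D*a) := by noncomm_ring
  have hA : a * (D * (a*w)) = a := by
    calc a * (D*(a*w)) = (a*(D*a))*w := by noncomm_ring
    _ = (a*U)*w := by rw [hau]
    _ = a*(U*w) := by rw [mul_assoc]
    _ = a := by rw [hw2, mul_one]
  have hB : a * (w * (D*a)) = a := by rw [← hca]; exact hreg'
  have ht13 : (a*(w*D2)) * (star a * a) = a := by
    calc (a*(w*D2)) * (star a * a) = a*(w*((D2 * star a)*a)) := by noncomm_ring
    _ = a*(w*(D*a)) := by rw [hd2]
    _ = a := hB
  obtain ⟨h13a, h13s, h13e⟩ := aux_thirteen a (a*(w*D2)) ht13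
  have ht14 : a * (star a * (D2*(a*w))) = a := by
    calc a * (star a * (D2*(a*w))) = a * ((star a * D2)*(a*w)) := by noncomm_ring
    _ = a * (D*(a*w)) := by rw [hd2']
    _ = a := hA
  obtain ⟨h14a, h14s, h14e⟩ := aux_fourteen a (D2*(a*w)) ht14
  have haF : a * (star (D2*(a*w)) * a) = a := by rw [← mul_assoc]; exact h14a
  set T := a*(w*D2) with hT
  set S := D2*(a*w) with hS
  obtain ⟨rr, hr⟩ : ∃ rr, a * (star a * (star a * rr)) = a := by
    refine ⟨D3*(a*w), ?_⟩
    calc a * (star a * (star a * (D3*(a*w))))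
        = a * (((star a * star a) * D3)*(a*w)) := by noncomm_ring
    _ = a * (D*(a*w)) := by rw [hd33]
    _ = a := hA
  obtain ⟨ll, hl⟩ : ∃ ll, ll * (star a * (star a * a)) = a := by
    refine ⟨a*(w*D3), ?_⟩
    calc (a*(w*D3)) * (star a * (star a * a))
        = a*(w*((D3*(star a * star a))*a)) := by noncomm_ring
    _ = a*(w*(D*a)) := by rw [hd33']
    _ = a := hB
  have hr' := congrArg star hr
  simp only [star_mul, star_star] at hr'
  have hl' := congrArg star hl
  simp only [star_mul, star_star] at hl'
  have hFq : star S * a = star rr * (a*a) := by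
    calc star S * a = star a * S := h14e
    _ = (star rr * a * a * star a) * S := by rw [hr']
    _ = star rr * (a*(a*(star a * S))) := by noncomm_ring
    _ = star rr * (a*(a*(star S * a))) := by rw [← h14e]
    _ = star rr * (a*a) := by rw [haF]
  have hq : (a * star rr) * (a*a) = a := by
    calc (a*star rr)*(a*a) = a*(star rr*(a*a)) := by rw [mul_assoc]
    _ = a*(star S * a) := by rw [← hFq]
    _ = a := haF
  have hEl : a * star T = a * (a * star ll) := by
    calc a * star T = T * star a := h13e
    _ = T * (star a * a * a * star ll) := by rw [hl']
    _ = (T * (star a * a)) * (a * star ll) := by noncomm_ring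
    _ = a * (a * star ll) := by rw [ht13]
  have hp : a * (a * (star ll * a)) = a := by
    calc a * (a * (star ll * a)) = (a * (a * star ll)) * a := by noncomm_ring
    _ = (a * star T) * a := by rw [← hEl]
    _ = a := h13a
  have hap_qa : a * (star ll * a) = (a * star rr) * a := by
    nth_rewrite 1 [← hq]
    calc ((a*star rr)*(a*a)) * (star ll * a)
        = (a*star rr) * (a * (a * (star ll * a))) := by noncomm_ring
    _ = (a*star rr) * a := by rw [hp]
  have hqa2 : ((a*star rr)*a)*a = a := by rw [mul_assoc]; exact hq
  have hah : (a*(star ll * a)) * a = a := by rw [hap_qa]; exact hqa2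
  have haqa : a * ((a*star rr)*a) = a := by rw [← hap_qa]; exact hp
  set G0 := (a*star rr) * (a*(star ll*a)) with hG0
  have hag : a * G0 = a * (star ll * a) := by
    rw [hG0]
    calc a * ((a*star rr) * (a*(star ll*a)))
        = (a * ((a*star rr)*a)) * (star ll * a) := by noncomm_ring
    _ = a * (star ll * a) := by rw [haqa]
  have hga : G0 * a = a * (star ll * a) := by
    rw [hG0]
    calc ((a*star rr) * (a*(star ll*a))) * a
        = (a*star rr) * ((a*(star ll*a))*a) := by rw [mul_assoc]
    _ = (a*star rr) * a := by rw [hah]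
    _ = a * (star ll * a) := hap_qa.symm
  have c1 : a * (G0 * (a * star T)) * a = a := by
    calc a * (G0 * (a * star T)) * a = (a*G0) * ((a * star T)*a) := by noncomm_ring
    _ = (a * (star ll * a)) * a := by rw [hag, h13a]
    _ = a := hah
  have c2 : G0 * (a * star T) = a * (star rr * ((a*(star ll*a)) * (a * star T))) := by
    rw [hG0]; noncomm_ring
  have c3 : (G0 * (a * star T)) * (a*a) = a := by
    calc (G0 * (a * star T)) * (a*a) = G0*(((a * star T)*a)*a) := by noncomm_ring
    _ = G0*(a*a) := by rw [h13a]
    _ = (G0*a)*a := by rw [← mul_assoc]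
    _ = (a*(star ll*a))*a := by rw [hga]
    _ = a := hah
  have c4 : G0 * (a * star T) = (G0 * T) * star a := by
    rw [h13e, ← mul_assoc]
  have haX : a * (G0 * (a * star T)) = a * star T := by
    calc a * (G0 * (a * star T)) = (a*G0) * (a * star T) := by rw [← mul_assoc]
    _ = (a*(star ll*a)) * (a * star T) := by rw [hag]
    _ = ((a*(star ll*a))*a) * star T := by noncomm_ring
    _ = a * star T := by rw [hah]
  have hsaE : star a * (a * star T) = star a := by
    calc star a * (a*star T) = star a * star (a * star T) := by rw [h13s]
    _ = star ((a*star T) * a) := (star_mul _ _).symm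
    _ = star a := by rw [h13a]
  have c5 : star a = (star a * a) * (G0 * (a * star T)) := by
    calc star a = star a * (a * star T) := hsaE.symm
    _ = star a * (a * (G0 * (a * star T))) := by rw [haX]
    _ = (star a * a) * (G0 * (a * star T)) := by rw [← mul_assoc]
  have d1 : a * ((star S * a) * G0) * a = a := by
    calc a * ((star S * a) * G0) * a
        = (a*(star S*a)) * (G0*a) := by noncomm_ring
    _ = a * (G0*a) := by rw [haF]
    _ = a * (a*(star ll*a)) := by rw [hga]
    _ = a := hp
  have d2c : (star S * a) * G0 = ((star S*a)*((a*star rr)*(a*star ll)))*a := by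
    rw [hG0]; noncomm_ring
  have d3c : (a*a)*((star S * a) * G0) = a := by
    calc (a*a)*((star S * a) * G0) = a*((a*(star S*a))*G0) := by noncomm_ring
    _ = a*(a*G0) := by rw [haF]
    _ = a*(a*(star ll*a)) := by rw [hag]
    _ = a := hp
  have d4c : (star S * a) * G0 = star a * (S*G0) := by
    rw [h14e, mul_assoc]
  have hYa : ((star S * a) * G0)*a = star S * a := by
    calc ((star S*a)*G0)*a = (star S*a)*(G0*a) := by rw [mul_assoc]
    _ = (star S*a)*(a*(star ll*a)) := by rw [hga]
    _ = star S*(a*(a*(star ll*a))) := by noncomm_ring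
    _ = star S * a := by rw [hp]
  have hFsa : (star S * a) * star a = star a := by
    conv_lhs => rw [← h14s]
    calc star (star S * a) * star a = star (a * (star S * a)) := (star_mul _ _).symm
    _ = star a := by rw [haF]
  have d5c : star a = ((star S * a) * G0)*(a*star a) := by
    calc star a = (star S * a) * star a := hFsa.symm
    _ = (((star S*a)*G0)*a) * star a := by rw [hYa]
    _ = ((star S*a)*G0)*(a*star a) := by rw [mul_assoc]
  exact ⟨⟨G0 * (a * star T), c1, ⟨_, c2⟩, ⟨_, c3.symm⟩, ⟨_, c4⟩, ⟨_, c5⟩⟩,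
    ⟨(star S * a) * G0, d1, ⟨_, d2c⟩, ⟨_, d3c.symm⟩, ⟨_, d4c⟩, ⟨_, d5c⟩⟩⟩

end StmtAux

theorem stmt_16 {R : Type*} [Ring R] [StarRing R] (a c : R) (hreg : a * c * a = a)
    (n : ℕ) (hn : 2 ≤ n) :
    (((∃ x : R, IsCoreInverse a x) ∧ (∃ y : R, IsDualCoreInverse a y)) ↔
      IsUnit ((star a) ^ n * a + 1 - c * a)) ∧
    (IsUnit ((star a) ^ n * a + 1 - c * a) ↔
      IsUnit (a * (star a) ^ n + 1 - a * c)) := by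
  have hreg' : a * (c * a) = a := by rw [← mul_assoc]; exact hreg
  have hn1 : 1 ≤ n := by omega
  have hu_eq : (star a)^n * a + 1 - c * a = 1 + ((star a)^n - c) * a := by noncomm_ring
  have hv_eq : a * (star a)^n + 1 - a * c = 1 + a * ((star a)^n - c) := by noncomm_ring
  constructor
  · constructor
    · rintro ⟨⟨X, hXa, hX1, hX2⟩, ⟨Y, hYa, hY1, hY2⟩⟩
      obtain ⟨⟨p₀, hXp⟩, ⟨q₀, hqX⟩⟩ := aux_mem_right hX1
      obtain ⟨⟨r₀, hXr⟩, ⟨s₀, hsX⟩⟩ := aux_mem_left hX2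
      obtain ⟨⟨p₁, hYp⟩, ⟨q₁, hqY⟩⟩ := aux_mem_left hY1
      obtain ⟨⟨r₁, hYr⟩, ⟨s₁, hsY⟩⟩ := aux_mem_right hY2
      obtain ⟨m, hm⟩ := aux_forward_m a X Y n hn1 hXa ⟨r₀, hXr⟩ hYa ⟨p₁, hYp⟩ ⟨q₁, hqY⟩ ⟨r₁, hYr⟩
      have hRight := aux_rightInv a c ((star a)^n) m hreg' hm
      -- left inverse via the star-symmetric statement
      have hstar_reg : star a * (star c * star a) = star a := by
        have h' := congrArg star hreg
        simp only [star_mul, star_star] at h'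
        exact h'
      have hXa' : star a * star Y * star a = star a := by
        have h' := congrArg star hYa
        simp only [star_mul, star_star] at h'
        rw [← mul_assoc] at h'
        exact h'
      have hYa' : star a * star X * star a = star a := by
        have h' := congrArg star hXa
        simp only [star_mul, star_star] at h'
        rw [← mul_assoc] at h'
        exact h'
      obtain ⟨m2, hm2⟩ := aux_forward_m (star a) (star Y) (star X) n hn1 hXa'
        ⟨star r₁, by rw [hYr, star_mul]⟩ hYa'
        ⟨star p₀, by rw [hXp, star_mul]⟩
        ⟨star q₀, by rw [hqX, star_mul]⟩
        ⟨star r₀, by rw [hXr, star_mul]⟩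
      rw [star_star] at hm2
      have hLeft0 := aux_rightInv (star a) (star c) (a^n) m2 hstar_reg hm2
      have hVs : star (a^n * star a + 1 - star c * star a) = a * (star a)^n + 1 - a * c := by
        simp only [star_sub, star_add, star_mul, star_one, star_star, star_pow]
      obtain ⟨Wl0, hWl0⟩ : ∃ z, z * (a * (star a)^n + 1 - a*c) = 1 := by
        refine ⟨star (star c * (star a * m2) + (1 - star c * star a) *
          (1 - a^n * (star a * (star c * (star a * m2))))), ?_⟩
        have h' := congrArg star hLeft0
        rw [star_mul, star_one, hVs] at h'
        exact h'
      have hL := aux_jacobL a ((star a)^n - c) Wl0 (by rw [← hv_eq]; exact hWl0)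
      rw [← hu_eq] at hL
      obtain ⟨Wr, hWr⟩ : ∃ Wr, ((star a)^n * a + 1 - c*a) * Wr = 1 := ⟨_, hRight⟩
      obtain ⟨Wl, hWl⟩ : ∃ Wl, Wl * ((star a)^n * a + 1 - c*a) = 1 := ⟨_, hL⟩
      rw [isUnit_iff_exists]
      refine ⟨Wr, hWr, ?_⟩
      have hWlr : Wl = Wr := by
        calc Wl = Wl * (((star a)^n * a + 1 - c*a) * Wr) := by rw [hWr, mul_one]
        _ = (Wl * ((star a)^n * a + 1 - c*a)) * Wr := by rw [← mul_assoc]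
        _ = Wr := by rw [hWl, one_mul]
      rw [← hWlr]; exact hWl
    · intro h
      rw [isUnit_iff_exists] at h
      obtain ⟨w, hw2, hw1⟩ := h
      obtain ⟨⟨X, e1, e2, e3, e4, e5⟩, ⟨Y, f1, f2, f3, f4, f5⟩⟩ :=
        aux_backward a c hreg' n hn w hw1 hw2
      exact ⟨⟨X, e1, aux_ideal_right_eq e2 e3, aux_ideal_left_eq e4 e5⟩,
        ⟨Y, f1, aux_ideal_left_eq f2 f3, aux_ideal_right_eq f4 f5⟩⟩
  · constructor
    · intro h
      rw [hu_eq] at h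
      have h2 := aux_jacobson ((star a)^n - c) a h
      rw [← hv_eq] at h2
      exact h2
    · intro h
      rw [hv_eq] at h
      have h2 := aux_jacobson a ((star a)^n - c) h
      rw [← hu_eq] at h2
      exact h2
end

section
/- Let R be a unital ring with involution, a ∈ R, and n ≥ 2. Then a is both Moore-Penrose invertible and group invertible if and only if a ∈ a(a*)^n a R ∩ R a(a*)^n a. -/
section Aux

variable {R : Type*} [Ring R] [StarRing R]

/-- From `a = a a* u` we get that `u*` is a {1,4}-inverse of `a`. -/
lemma aux_l14 (a u : R) (h : a * (star a * u) = a) :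
    a * (star u * a) = a ∧ star (star u * a) = star u * a := by
  have h' : star u * (a * star a) = star a := by
    calc star u * (a * star a) = star (a * (star a * u)) := by
          simp only [star_mul, star_star, mul_assoc]
      _ = star a := by rw [h]
  have e1 : star a * u = star u * a := by
    calc star a * u = (star u * (a * star a)) * u := by rw [h']
      _ = star u * a := by simp only [mul_assoc]; rw [h]
  constructor
  · rw [← e1]; exact h
  · calc star (star u * a) = star a * u := by simp only [star_mul, star_star]
      _ = star u * a := e1

/-- From `a = w a* a` we get that `w*` is a {1,3}-inverse of `a`. -/
lemma aux_l13 (a w : R) (h : w * (star a * a) = a) :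
    a * (star w * a) = a ∧ star (a * star w) = a * star w := by
  have h' : star a * (a * star w) = star a := by
    calc star a * (a * star w) = star (w * (star a * a)) := by
          simp only [star_mul, star_star, mul_assoc]
      _ = star a := by rw [h]
  have e3 : a * star w = w * star a := by
    calc a * star w = (w * (star a * a)) * star w := by rw [h]
      _ = w * star a := by simp only [mul_assoc]; rw [h']
  constructor
  · calc a * (star w * a) = (a * star w) * a := (mul_assoc a (star w) a).symm
      _ = (w * star a) * a := by rw [e3]
      _ = a := by rw [mul_assoc]; exact h
  · calc star (a * star w) = w * star a := by simp only [star_mul, star_star]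
      _ = a * star w := e3.symm

lemma aux_mp (a u w : R) (e14 : a * (star u * a) = a) (s14 : star (star u * a) = star u * a)
    (e13 : a * (star w * a) = a) (s13 : star (a * star w) = a * star w) :
    IsMPInverse a (star u * (a * star w)) := by
  have had : a * (star u * (a * star w)) = a * star w := by
    calc a * (star u * (a * star w)) = (a * (star u * a)) * star w := by
          simp only [mul_assoc]
      _ = a * star w := by rw [e14]
  have hda : (star u * (a * star w)) * a = star u * a := by
    calc (star u * (a * star w)) * a = star u * (a * (star w * a)) := by
          simp only [mul_assoc]
      _ = star u * a := by rw [e13]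
  refine ⟨?_, ?_, ?_, ?_⟩
  · rw [had, mul_assoc]; exact e13
  · rw [hda]
    calc (star u * a) * (star u * (a * star w))
        = star u * ((a * (star u * a)) * star w) := by simp only [mul_assoc]
      _ = star u * (a * star w) := by rw [e14]
  · rw [had]; exact s13
  · rw [hda]; exact s14

lemma aux_grp_s17 (a xg yg : R) (hx : a * a * xg = a) (hy : yg * (a * a) = a) :
    ∃ z : R, a * z * a = a ∧ z * a * z = z ∧ a * z = z * a := by
  have hx' : a * (a * xg) = a := by rw [← mul_assoc]; exact hx
  have k1 : a * xg = yg * a := by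
    calc a * xg = (yg * (a * a)) * xg := by rw [hy]
      _ = yg * a := by simp only [mul_assoc]; rw [hx']
  have k2 : a * yg * a = a := by
    calc a * yg * a = a * (yg * a) := by rw [mul_assoc]
      _ = a * (a * xg) := by rw [← k1]
      _ = a := hx'
  have k3 : a * xg * a = a := by
    calc a * xg * a = (yg * a) * a := by rw [k1]
      _ = a := by rw [mul_assoc]; exact hy
  have k3' : a * (xg * a) = a := by rw [← mul_assoc]; exact k3
  have az : a * (yg * (a * xg)) = a * xg := by
    calc a * (yg * (a * xg)) = (a * yg * a) * xg := by simp only [mul_assoc]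
      _ = a * xg := by rw [k2]
  have za : (yg * (a * xg)) * a = yg * a := by
    calc (yg * (a * xg)) * a = yg * (a * (xg * a)) := by simp only [mul_assoc]
      _ = yg * a := by rw [k3']
  refine ⟨yg * (a * xg), ?_, ?_, ?_⟩
  · rw [az]; exact k3
  · rw [za]
    calc (yg * a) * (yg * (a * xg)) = yg * ((a * yg * a) * xg) := by simp only [mul_assoc]
      _ = yg * (a * xg) := by rw [k2]
  · rw [az, za, k1]

lemma key_r (a x y : R) (h1 : a = a * (star a * star x))
    (h2 : star a * (star a * star y) = star a) :
    ∀ k : ℕ, a = a * ((star a) ^ (k + 1) * ((star y) ^ k * star x)) := by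
  intro k
  induction k with
  | zero => simpa only [pow_zero, pow_succ, pow_zero, one_mul] using h1
  | succ k ih =>
      have e : (star a) ^ (k + 1 + 1) * ((star y) ^ (k + 1) * star x)
          = (star a) ^ (k + 1) * ((star y) ^ k * star x) := by
        calc (star a) ^ (k + 1 + 1) * ((star y) ^ (k + 1) * star x)
            = (star a) ^ k * ((star a * (star a * star y)) * ((star y) ^ k * star x)) := by
              rw [pow_succ (star a) (k + 1), pow_succ (star a) k, pow_succ' (star y) k]
              simp only [mul_assoc]
          _ = (star a) ^ k * (star a * ((star y) ^ k * star x)) := by rw [h2]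
          _ = (star a) ^ (k + 1) * ((star y) ^ k * star x) := by
              rw [pow_succ (star a) k]; simp only [mul_assoc]
      rw [e]; exact ih

lemma key_l (a x y : R) (h1 : a = (star x * star a) * a)
    (h2 : star y * (star a * star a) = star a) :
    ∀ k : ℕ, a = star x * ((star y) ^ k * ((star a) ^ (k + 1) * a)) := by
  intro k
  induction k with
  | zero => simpa only [pow_zero, pow_succ, one_mul, mul_assoc] using h1
  | succ k ih =>
      have e : (star y) ^ (k + 1) * ((star a) ^ (k + 1 + 1) * a)
          = (star y) ^ k * ((star a) ^ (k + 1) * a) := by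
        calc (star y) ^ (k + 1) * ((star a) ^ (k + 1 + 1) * a)
            = (star y) ^ k * ((star y * (star a * star a)) * ((star a) ^ k * a)) := by
              rw [pow_succ (star y) k, pow_succ' (star a) (k + 1), pow_succ' (star a) k]
              simp only [mul_assoc]
          _ = (star y) ^ k * (star a * ((star a) ^ k * a)) := by rw [h2]
          _ = (star y) ^ k * ((star a) ^ (k + 1) * a) := by
              rw [pow_succ' (star a) k]; simp only [mul_assoc]
      rw [e]; exact ih

end Aux

theorem stmt_17 {R : Type*} [Ring R] [StarRing R] (a : R) (n : ℕ) (hn : 2 ≤ n) :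
    ((∃ x : R, IsMPInverse a x) ∧ (∃ y : R, IsGroupInverse a y)) ↔
      ((∃ r : R, a = a * (star a) ^ n * a * r) ∧
        (∃ r : R, a = r * (a * (star a) ^ n * a))) := by
  obtain ⟨m, rfl⟩ : ∃ m, n = m + 1 + 1 := ⟨n - 2, by omega⟩
  constructor
  · rintro ⟨⟨x, hx⟩, ⟨y, hy⟩⟩
    obtain ⟨hx1, hx2, hx3, hx4⟩ := hx
    obtain ⟨hy1, hy2, hy3⟩ := hy
    have F2 : star x * star a = a * x := by rw [← star_mul]; exact hx3
    have F3 : star a * star x = x * a := by rw [← star_mul]; exact hx4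
    have F1 : star a * (star x * star a) = star a := by
      calc star a * (star x * star a) = star (a * x * a) := by
            simp only [star_mul, mul_assoc]
        _ = star a := by rw [hx1]
    have F4a : a * a * y = a := by rw [mul_assoc, hy3, ← mul_assoc, hy1]
    have F4b : y * a * a = a := by rw [← hy3]; exact hy1
    have F5a : star a * (star a * star y) = star a := by
      calc star a * (star a * star y) = star (y * a * a) := by
            simp only [star_mul, mul_assoc]
        _ = star a := by rw [F4b]
    have F5b : star y * (star a * star a) = star a := by
      calc star y * (star a * star a) = star (a * a * y) := by
            simp only [star_mul, mul_assoc]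
        _ = star a := by rw [F4a]
    have h1r : a = a * (star a * star x) := by rw [F3, ← mul_assoc, hx1]
    have h1l : a = (star x * star a) * a := by rw [F2, hx1]
    constructor
    · refine ⟨x * ((star y) ^ (m + 1) * star x), ?_⟩
      calc a = a * ((star a) ^ (m + 1 + 1) * ((star y) ^ (m + 1) * star x)) :=
            key_r a x y h1r F5a (m + 1)
        _ = a * ((star a) ^ (m + 1) * ((star a * (star x * star a)) *
              ((star y) ^ (m + 1) * star x))) := by
            rw [F1, pow_succ (star a) (m + 1)]; simp only [mul_assoc]
        _ = a * ((star a) ^ (m + 1) * (star a * ((star x * star a) *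
              ((star y) ^ (m + 1) * star x)))) := by simp only [mul_assoc]
        _ = a * ((star a) ^ (m + 1) * (star a * ((a * x) *
              ((star y) ^ (m + 1) * star x)))) := by rw [F2]
        _ = a * (star a) ^ (m + 1 + 1) * a * (x * ((star y) ^ (m + 1) * star x)) := by
            rw [pow_succ (star a) (m + 1)]; simp only [mul_assoc]
    · refine ⟨star x * ((star y) ^ (m + 1) * x), ?_⟩
      calc a = star x * ((star y) ^ (m + 1) * ((star a) ^ (m + 1 + 1) * a)) :=
            key_l a x y h1l F5b (m + 1)
        _ = star x * ((star y) ^ (m + 1) * ((star a * (star x * star a)) *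
              ((star a) ^ (m + 1) * a))) := by
            rw [F1, pow_succ' (star a) (m + 1)]; simp only [mul_assoc]
        _ = star x * ((star y) ^ (m + 1) * ((star a * star x) *
              (star a * ((star a) ^ (m + 1) * a)))) := by simp only [mul_assoc]
        _ = star x * ((star y) ^ (m + 1) * ((x * a) *
              (star a * ((star a) ^ (m + 1) * a)))) := by rw [F3]
        _ = (star x * ((star y) ^ (m + 1) * x)) * (a * (star a) ^ (m + 1 + 1) * a) := by
            rw [pow_succ' (star a) (m + 1)]; simp only [mul_assoc]
  · rintro ⟨⟨s, hs⟩, ⟨t, ht⟩⟩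
    have hu : a * (star a * ((star a) ^ (m + 1) * (a * s))) = a := by
      conv_rhs => rw [hs]
      rw [pow_succ' (star a) (m + 1)]; simp only [mul_assoc]
    have hw : (t * (a * (star a) ^ (m + 1))) * (star a * a) = a := by
      conv_rhs => rw [ht]
      rw [pow_succ (star a) (m + 1)]; simp only [mul_assoc]
    obtain ⟨e14, s14⟩ := aux_l14 a ((star a) ^ (m + 1) * (a * s)) hu
    obtain ⟨e13, s13⟩ := aux_l13 a (t * (a * (star a) ^ (m + 1))) hw
    constructor
    · exact ⟨_, aux_mp a _ _ e14 s14 e13 s13⟩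
    · have gx : a * a * (a ^ m * (star a * (star t * a))) = a := by
        have h := e13
        simp only [star_mul, star_pow, star_star] at h
        rw [pow_succ' a m] at h
        simp only [mul_assoc] at h ⊢
        exact h
      have gy : (a * (star s * (star a * a ^ m))) * (a * a) = a := by
        have h := e14
        simp only [star_mul, star_pow, star_star] at h
        rw [pow_succ a m] at h
        simp only [mul_assoc] at h ⊢
        exact h
      exact aux_grp_s17 a _ _ gx gy
end

section
/- Let R be a unital ring with involution, a ∈ R, and n ≥ 1. If a ∈ R a (a*)^n a, then a ∈ a^n a* a^n R. -/
theorem stmt_18 {R : Type*} [Ring R] [StarRing R] (a : R) (n : ℕ) (hn : 1 ≤ n)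
    (h : ∃ r : R, a = r * (a * (star a) ^ n * a)) :
    ∃ r : R, a = a ^ n * star a * a ^ n * r := by
  obtain ⟨m, rfl⟩ : ∃ m, n = m + 1 := ⟨n - 1, by omega⟩
  obtain ⟨r, hr⟩ := h
  have h1 : star a = star a * a ^ (m + 1) * star a * star r := by
    conv_lhs => rw [hr]
    simp [star_mul, star_pow, mul_assoc]
  have h2 : a = a ^ (m + 1) * star a * star r * a := by
    calc a = r * (a * ((star a) ^ m * star a) * a) := by rw [← pow_succ]; exact hr
    _ = r * (a * ((star a) ^ m * (star a * a ^ (m + 1) * star a * star r)) * a) := by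
        nth_rewrite 2 [h1]; rfl
    _ = (r * (a * (star a) ^ (m + 1) * a)) * (a ^ m * star a * star r * a) := by
        rw [pow_succ' a m, pow_succ (star a) m]; noncomm_ring
    _ = a ^ (m + 1) * star a * star r * a := by
        rw [← hr, pow_succ']; noncomm_ring
  refine ⟨star a * star r * star r * a, ?_⟩
  calc a = a ^ (m + 1) * star a * star r * a := h2
  _ = a ^ (m + 1) * (star a * a ^ (m + 1) * star a * star r) * star r * a := by
      nth_rewrite 1 [h1]; rfl
  _ = a ^ (m + 1) * star a * a ^ (m + 1) * (star a * star r * star r * a) := by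
      noncomm_ring
end

section
/- Let R be a unital ring with involution and n ≥ 2. If for every a ∈ R the condition a ∈ a(a*)^n a R holds exactly when a ∈ R a(a*)^n a holds, then a a* = 1 implies a* a = 1 for every a ∈ R. -/
theorem stmt_19 {R : Type*} [Ring R] [StarRing R] (n : ℕ) (hn : 2 ≤ n)
    (h : ∀ a : R, (∃ r : R, a = a * (star a) ^ n * a * r) ↔
      (∃ r : R, a = r * (a * (star a) ^ n * a))) :
    ∀ a : R, a * star a = 1 → star a * a = 1 := by
  obtain ⟨m, rfl⟩ : ∃ m, n = m + 2 := ⟨n - 2, by omega⟩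
  intro a haa
  have L1 : ∀ k : ℕ, a ^ k * (star a) ^ k = 1 := by
    intro k
    induction k with
    | zero => simp
    | succ k ih =>
      rw [pow_succ, pow_succ', mul_assoc, ← mul_assoc a, haa, one_mul, ih]
  have L2 : ∀ k : ℕ, a * (star a) ^ (k + 1) = (star a) ^ k := by
    intro k
    rw [pow_succ', ← mul_assoc, haa, one_mul]
  have L3 : ∀ k : ℕ, a ^ (k + 1) * star a = a ^ k := by
    intro k
    rw [pow_succ, mul_assoc, haa, mul_one]
  obtain ⟨r, hr⟩ := (h a).mpr ⟨a ^ (m + 1), by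
    rw [L2 (m + 1), ← mul_assoc, L1 (m + 1), one_mul]⟩
  rw [L2 (m + 1)] at hr
  -- hr : a = (star a)^(m+1) * a * r
  have har : a * r = a ^ (m + 2) := by
    calc a * r = 1 * (a * r) := (one_mul _).symm
    _ = a ^ (m + 1) * (star a) ^ (m + 1) * (a * r) := by rw [L1]
    _ = a ^ (m + 1) * ((star a) ^ (m + 1) * a * r) := by
        rw [mul_assoc, mul_assoc]
    _ = a ^ (m + 1) * a := by rw [← hr]
    _ = a ^ (m + 2) := (pow_succ a (m + 1)).symm
  have key : a = (star a) ^ (m + 1) * a ^ (m + 2) := by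
    calc a = (star a) ^ (m + 1) * a * r := hr
    _ = (star a) ^ (m + 1) * (a * r) := by rw [mul_assoc]
    _ = (star a) ^ (m + 1) * a ^ (m + 2) := by rw [har]
  have hstar : star a = (star a) ^ (m + 2) * a ^ (m + 1) := by
    conv_lhs => rw [key]
    simp [star_mul, star_pow, star_star]
  have hk : (star a) ^ (m + 1) * a ^ (m + 1) = 1 := by
    calc (star a) ^ (m + 1) * a ^ (m + 1)
        = a * (star a) ^ (m + 2) * a ^ (m + 1) := by rw [L2 (m + 1)]
    _ = a * ((star a) ^ (m + 2) * a ^ (m + 1)) := by rw [mul_assoc]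
    _ = a * star a := by rw [← hstar]
    _ = 1 := haa
  have down : ∀ k : ℕ, (star a) ^ (k + 1) * a ^ (k + 1) = 1 → star a * a = 1 := by
    intro k
    induction k with
    | zero => intro hk0; simpa using hk0
    | succ k ih =>
      intro hk1
      apply ih
      calc (star a) ^ (k + 1) * a ^ (k + 1)
          = (star a) ^ (k + 1) * (a ^ (k + 2) * star a) := by rw [L3 (k + 1)]
      _ = a * (star a) ^ (k + 2) * (a ^ (k + 2) * star a) := by rw [L2 (k + 1)]
      _ = a * ((star a) ^ (k + 2) * a ^ (k + 2)) * star a := by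
          rw [mul_assoc, mul_assoc, mul_assoc]
      _ = a * 1 * star a := by rw [hk1]
      _ = 1 := by rw [mul_one, haa]
  exact down m hk
end
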